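/- arXiv:2101.02473 — 6 statements merged into one kernel-verified Lean document; each statement's English description precedes it below -/
import Mathlib

section
/- Let f : ℝ → ℝ be continuously differentiable, and suppose there is a continuously differentiable function g : [−1,1] → ℝ with g(s) = f(1/s)/s for all s ∈ [−1,1] \ {0}. Then for every x ∈ (−1,1) with x ≠ 0, the principal value PV∫_ℝ f(y)/(x−y) dy exists and equals ∫_{−1}^{1} (f(y)−f(x))/(x−y) dy + (1/x)·∫_{−1}^{1} (g(s) − x·f(x))/(s − 1/x) ds, where both integrals on the right are ordinary (absolutely convergent) Lebesgue integrals; in particular the logarithmic terms arising from each subinterval cancel. -/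
open MeasureTheory Filter Set Topology

set_option maxHeartbeats 1600000 in
/-- For a continuously differentiable `f : ℝ → ℝ` such that
`s ↦ f(1/s)/s` extends to a continuously differentiable function `g` on `[−1,1]`,
and for every `x ∈ (−1,1)` with `x ≠ 0`, the principal value `PV∫_ℝ f(y)/(x−y) dy`
exists and equals
`∫_{−1}^{1} (f(y)−f(x))/(x−y) dy + (1/x)·∫_{−1}^{1} (g(s) − x·f(x))/(s − 1/x) ds`. -/
theorem pv_two_domain_formula
    (f g : ℝ → ℝ) (hf : ContDiff ℝ 1 f)
    (hg : ContDiffOn ℝ 1 g (Icc (-1 : ℝ) 1))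
    (hfg : ∀ s ∈ Icc (-1 : ℝ) 1, s ≠ 0 → g s = f (1 / s) / s)
    (x : ℝ) (hx : x ∈ Ioo (-1 : ℝ) 1) (hx0 : x ≠ 0) :
    Tendsto
      (fun ε : ℝ => ∫ y in {y : ℝ | ε < |y - x|}, f y / (x - y))
      (𝓝[>] 0)
      (𝓝 ((∫ y in Ioo (-1 : ℝ) 1, (f y - f x) / (x - y))
        + (1 / x) * ∫ s in Ioo (-1 : ℝ) 1, (g s - x * f x) / (s - 1 / x))) := by
  obtain ⟨hx1, hx2⟩ := hx
  have h1x : (0:ℝ) < 1 - x := by linarith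
  have h1x' : (0:ℝ) < 1 + x := by linarith
  have hxabs : |x| < 1 := abs_lt.2 ⟨hx1, hx2⟩
  -- the denominator s - 1/x does not vanish on [-1,1]
  have hden : ∀ s : ℝ, s ∈ Icc (-1:ℝ) 1 → s - 1/x ≠ 0 := by
    intro s hs h
    have hs1 : |s| ≤ 1 := abs_le.2 ⟨hs.1, hs.2⟩
    have hsx : s = 1/x := sub_eq_zero.1 h
    have : |s| * |x| = 1 := by
      rw [← abs_mul, hsx]; field_simp; exact abs_one
    nlinarith [abs_nonneg s, abs_nonneg x]
  -- Lipschitz bound for f on [-1,1]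
  have hfd : Continuous (deriv f) := hf.continuous_deriv le_rfl
  obtain ⟨M, hM⟩ := isCompact_Icc.exists_bound_of_continuousOn
    (s := Icc (-1:ℝ) 1) hfd.continuousOn
  have hxIcc : x ∈ Icc (-1:ℝ) 1 := ⟨hx1.le, hx2.le⟩
  have hM0 : 0 ≤ M := le_trans (norm_nonneg _) (hM x hxIcc)
  have hlip : ∀ y ∈ Icc (-1:ℝ) 1, |f y - f x| ≤ M * |y - x| := fun y hy =>
    Convex.norm_image_sub_le_of_norm_deriv_le
      (fun z _ => (hf.differentiable one_ne_zero).differentiableAt) hM (convex_Icc _ _) hxIcc hy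
  -- the regularized inner integrand and its bound
  set h : ℝ → ℝ := fun y => (f y - f x) / (x - y) with hh
  have hmeas_h : Measurable h :=
    ((hf.continuous.sub continuous_const).measurable).div
      ((continuous_const.sub continuous_id).measurable)
  have hbound : ∀ y ∈ Icc (-1:ℝ) 1, |h y| ≤ M := by
    intro y hy
    rcases eq_or_ne y x with rfl | hyx
    · simp [hh, hM0]
    · have hxy : x - y ≠ 0 := sub_ne_zero.2 (Ne.symm (sub_ne_zero.1 (fun hc => hyx (by linarith [sub_eq_zero.1 hc]))))
      have h2 : |x - y| = |y - x| := abs_sub_comm x y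
      rw [hh]
      simp only
      rw [abs_div, h2, div_le_iff₀ (abs_pos.2 (fun hc => hyx (by
        have := sub_eq_zero.1 hc; linarith)))]
      exact hlip y hy
  have hIntI : IntegrableOn h (Ioo (-1:ℝ) 1) := by
    apply Measure.integrableOn_of_bounded (M := M) (measure_Ioo_lt_top).ne
      hmeas_h.aestronglyMeasurable
    refine (ae_restrict_iff' measurableSet_Ioo).2 (ae_of_all _ fun y hy => ?_)
    exact hbound y (Ioo_subset_Icc_self hy)
  -- integrability of the outer integrands on (-1,1)
  have hgc : ContinuousOn g (Icc (-1:ℝ) 1) := hg.continuousOn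
  have hcontG : ContinuousOn (fun s => g s / (s - 1/x)) (Icc (-1:ℝ) 1) :=
    hgc.div ((continuousOn_id.sub continuousOn_const)) (fun s hs => hden s hs)
  have hIntG : IntegrableOn (fun s => g s / (s - 1/x)) (Ioo (-1:ℝ) 1) :=
    (hcontG.integrableOn_Icc).mono_set Ioo_subset_Icc_self
  have hcontOne : ContinuousOn (fun s : ℝ => 1 / (s - 1/x)) (Icc (-1:ℝ) 1) :=
    continuousOn_const.div ((continuousOn_id.sub continuousOn_const)) (fun s hs => hden s hs)
  have hIntOne : IntegrableOn (fun s : ℝ => 1 / (s - 1/x)) (Ioo (-1:ℝ) 1) :=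
    (hcontOne.integrableOn_Icc).mono_set Ioo_subset_Icc_self
  -- image of (0,1) and (-1,0) under inversion
  have himg1 : (fun s : ℝ => s⁻¹) '' Ioo (0:ℝ) 1 = Ioi 1 := by
    ext y
    simp only [mem_image, mem_Ioo, mem_Ioi]
    constructor
    · rintro ⟨s, ⟨h0, h1⟩, rfl⟩
      have hs : s * s⁻¹ = 1 := mul_inv_cancel₀ (ne_of_gt h0)
      nlinarith [inv_pos.2 h0]
    · intro hy
      have hy0 : (0:ℝ) < y := lt_trans one_pos hy
      have hyy : y * y⁻¹ = 1 := mul_inv_cancel₀ (ne_of_gt hy0)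
      refine ⟨y⁻¹, ⟨inv_pos.2 hy0, ?_⟩, inv_inv y⟩
      nlinarith [inv_pos.2 hy0]
  have himg2 : (fun s : ℝ => s⁻¹) '' Ioo (-1:ℝ) 0 = Iio (-1) := by
    ext y
    simp only [mem_image, mem_Ioo, mem_Iio]
    constructor
    · rintro ⟨s, ⟨h0, h1⟩, rfl⟩
      have hs : s * s⁻¹ = 1 := mul_inv_cancel₀ (ne_of_lt h1)
      nlinarith [inv_neg''.2 h1]
    · intro hy
      have hy0 : y < 0 := lt_trans hy (by norm_num)
      have hyy : y * y⁻¹ = 1 := mul_inv_cancel₀ (ne_of_lt hy0)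
      refine ⟨y⁻¹, ⟨?_, inv_neg''.2 hy0⟩, inv_inv y⟩
      nlinarith [inv_neg''.2 hy0]
  -- pointwise identity after change of variables
  have hpt : ∀ s, s ∈ Ioo (-1:ℝ) 1 → s ≠ 0 →
      |(-(s^2)⁻¹)| • (f s⁻¹ / (x - s⁻¹)) = (1/x) * (g s / (s - 1/x)) := by
    intro s hs hs0
    have hgs : g s = f (1/s) / s := hfg s (Ioo_subset_Icc_self hs) hs0
    have hsabs : |s| < 1 := abs_lt.2 ⟨hs.1, hs.2⟩
    have hxs : x * s - 1 ≠ 0 := by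
      intro hc
      have h1 : |x * s| < 1 := by
        rw [abs_mul]
        nlinarith [abs_nonneg x, abs_nonneg s, abs_lt.2 ⟨hx1, hx2⟩]
      have hc1 : x * s = 1 := by linarith [sub_eq_zero.1 hc]
      rw [hc1] at h1; simp at h1
    have hs2 : (0:ℝ) < s^2 := by positivity
    have habs : |(-(s^2)⁻¹)| = (s^2)⁻¹ := by
      rw [abs_neg, abs_inv, abs_of_pos hs2]
    have hx1s : x - s⁻¹ ≠ 0 := by
      intro hc
      apply hxs
      have hc2 : x = s⁻¹ := by linarith [sub_eq_zero.1 hc]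
      rw [hc2, inv_mul_cancel₀ hs0, sub_self]
    have hsx : s - 1/x ≠ 0 := hden s (Ioo_subset_Icc_self hs)
    have hk : -s + s^2*x ≠ 0 := by
      intro hc
      exact mul_ne_zero hs0 hxs (by linear_combination hc)
    have hgs' : g s = f s⁻¹ * s⁻¹ := by rw [hgs, one_div, div_eq_mul_inv]
    rw [habs, hgs', smul_eq_mul]
    generalize f s⁻¹ = A
    field_simp
  -- change of variables on the outer region
  have hinj : ∀ S : Set ℝ, InjOn (fun s : ℝ => s⁻¹) S := fun S a _ b _ hab => inv_injective hab
  have hsub1 : Ioo (0:ℝ) 1 ⊆ Ioo (-1:ℝ) 1 := Ioo_subset_Ioo (by norm_num) le_rfl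
  have hsub2 : Ioo (-1:ℝ) 0 ⊆ Ioo (-1:ℝ) 1 := Ioo_subset_Ioo le_rfl (by norm_num)
  have cov1 : ∫ y in Ioi (1:ℝ), f y / (x - y) =
      ∫ s in Ioo (0:ℝ) 1, (1/x) * (g s / (s - 1/x)) := by
    rw [← himg1,
      integral_image_eq_integral_abs_deriv_smul measurableSet_Ioo
        (fun s hs => (hasDerivAt_inv (ne_of_gt hs.1)).hasDerivWithinAt)
        (hinj _) (fun y => f y / (x - y))]
    exact setIntegral_congr_fun measurableSet_Ioo
      (fun s hs => hpt s (hsub1 hs) (ne_of_gt hs.1))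
  have cov2 : ∫ y in Iio (-1:ℝ), f y / (x - y) =
      ∫ s in Ioo (-1:ℝ) 0, (1/x) * (g s / (s - 1/x)) := by
    rw [← himg2,
      integral_image_eq_integral_abs_deriv_smul measurableSet_Ioo
        (fun s hs => (hasDerivAt_inv (ne_of_lt hs.2)).hasDerivWithinAt)
        (hinj _) (fun y => f y / (x - y))]
    exact setIntegral_congr_fun measurableSet_Ioo
      (fun s hs => hpt s (hsub2 hs) (ne_of_lt hs.2))
  have hIntnice1 : IntegrableOn (fun s => (1/x) * (g s / (s - 1/x))) (Ioo (0:ℝ) 1) :=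
    ((hIntG.mono_set hsub1).const_mul _)
  have hIntnice2 : IntegrableOn (fun s => (1/x) * (g s / (s - 1/x))) (Ioo (-1:ℝ) 0) :=
    ((hIntG.mono_set hsub2).const_mul _)
  have hIntU1 : IntegrableOn (fun y => f y / (x - y)) (Ioi (1:ℝ)) := by
    rw [← himg1, integrableOn_image_iff_integrableOn_abs_deriv_smul measurableSet_Ioo
      (fun s hs => (hasDerivAt_inv (ne_of_gt hs.1)).hasDerivWithinAt) (hinj _)]
    exact hIntnice1.congr_fun
      (fun s hs => (hpt s (hsub1 hs) (ne_of_gt hs.1)).symm) measurableSet_Ioo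
  have hIntU2 : IntegrableOn (fun y => f y / (x - y)) (Iio (-1:ℝ)) := by
    rw [← himg2, integrableOn_image_iff_integrableOn_abs_deriv_smul measurableSet_Ioo
      (fun s hs => (hasDerivAt_inv (ne_of_lt hs.2)).hasDerivWithinAt) (hinj _)]
    exact hIntnice2.congr_fun
      (fun s hs => (hpt s (hsub2 hs) (ne_of_lt hs.2)).symm) measurableSet_Ioo
  have hUeq : {y : ℝ | 1 < |y|} = Iio (-1:ℝ) ∪ Ioi 1 := by
    ext y
    simp only [mem_setOf_eq, mem_union, mem_Iio, mem_Ioi, lt_abs]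
    constructor
    · rintro (hc | hc)
      · right; exact hc
      · left; linarith
    · rintro (hc | hc)
      · right; linarith
      · left; exact hc
  have hUmeas : MeasurableSet {y : ℝ | 1 < |y|} :=
    measurableSet_lt measurable_const continuous_abs.measurable
  have hIntU : IntegrableOn (fun y => f y / (x - y)) {y : ℝ | 1 < |y|} := by
    rw [hUeq]; exact hIntU2.union hIntU1
  have hdisjU : Disjoint (Iio (-1:ℝ)) (Ioi (1:ℝ)) :=
    Set.disjoint_left.2 fun y h1 h2 => by
      simp only [mem_Iio] at h1; simp only [mem_Ioi] at h2; linarith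
  have hsplit0 : (Ioo (-1:ℝ) 0 ∪ Ioo 0 1 : Set ℝ) =ᵐ[volume] Ioo (-1:ℝ) 1 := by
    rw [MeasureTheory.ae_eq_set]
    constructor
    · refine measure_mono_null (fun y hy => ?_) (measure_empty (μ := volume))
      rcases hy.1 with hc | hc
      · exact absurd ⟨hc.1, by linarith [hc.2]⟩ hy.2
      · exact absurd ⟨by linarith [hc.1], hc.2⟩ hy.2
    · refine measure_mono_null (fun y hy => ?_) (measure_singleton (0:ℝ))
      have h1 := hy.1
      by_contra h0
      simp only [mem_singleton_iff] at h0
      rcases lt_or_gt_of_ne h0 with hc | hc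
      · exact hy.2 (Or.inl ⟨h1.1, hc⟩)
      · exact hy.2 (Or.inr ⟨hc, h1.2⟩)
  have hOuter : ∫ y in {y : ℝ | 1 < |y|}, f y / (x - y) =
      (1/x) * ∫ s in Ioo (-1:ℝ) 1, g s / (s - 1/x) := by
    rw [hUeq, setIntegral_union hdisjU measurableSet_Ioi hIntU2 hIntU1, cov1, cov2,
      ← integral_const_mul, ← setIntegral_congr_set hsplit0,
      setIntegral_union (Set.disjoint_left.2 fun y h1 h2 => absurd h1.2 (not_lt.2 h2.1.le))
        measurableSet_Ioo hIntnice2 hIntnice1]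
  -- elementary log integral on the s-side
  have hconstA : ∫ s in Ioo (-1:ℝ) 1, 1 / (s - 1/x) = Real.log (1-x) - Real.log (1+x) := by
    rw [← integral_Ioc_eq_integral_Ioo, ← intervalIntegral.integral_of_le (by norm_num : (-1:ℝ) ≤ 1)]
    rw [intervalIntegral.integral_comp_sub_right (fun u => 1/u) (1/x)]
    rw [integral_one_div ?h0]
    · rw [show ((1:ℝ) - 1/x) / (-1 - 1/x) = (1-x)/(1+x) by
          have hne2 : (-1:ℝ) - x ≠ 0 := by intro hc; linarith
          field_simp [hne2]
          linear_combination (1-x) * (mul_inv_cancel₀ hne2),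
        Real.log_div (ne_of_gt h1x) (ne_of_gt h1x')]
    case h0 =>
      rcases lt_or_gt_of_ne hx0 with hneg | hpos
      · have hinv : 1/x < -1 := by
          rw [div_lt_iff_of_neg hneg]; linarith
        exact Set.notMem_uIcc_of_lt (by linarith) (by linarith)
      · have hinv : 1 < 1/x := by
          rw [lt_div_iff₀ hpos]; linarith
        exact Set.notMem_uIcc_of_gt (by linarith) (by linarith)
  have hRHS : (1/x) * ∫ s in Ioo (-1:ℝ) 1, (g s - x * f x) / (s - 1/x)
      = (1/x) * (∫ s in Ioo (-1:ℝ) 1, g s / (s - 1/x))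
        + f x * (Real.log (1+x) - Real.log (1-x)) := by
    have hsd : ∀ s : ℝ, (g s - x * f x) / (s - 1/x)
        = g s / (s - 1/x) - (x * f x) * (1 / (s - 1/x)) := by
      intro s; rw [sub_div, mul_one_div]
    simp only [hsd]
    rw [integral_sub hIntG (hIntOne.const_mul _), integral_const_mul, hconstA]
    field_simp
    ring
  -- small parameter threshold
  set ε₀ : ℝ := min (1-x) (1+x) with hε₀
  have hε₀pos : 0 < ε₀ := lt_min h1x h1x'
  have hSmeas : ∀ ε : ℝ, MeasurableSet {y : ℝ | ε < |y - x|} := fun ε =>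
    measurableSet_lt measurable_const
      ((continuous_abs.comp (continuous_id.sub continuous_const)).measurable)
  -- the eventual identity for small ε
  have hev : ∀ ε ∈ Ioo (0:ℝ) ε₀,
      ∫ y in {y : ℝ | ε < |y - x|}, f y / (x - y)
        = (∫ y in ({y : ℝ | ε < |y - x|} ∩ Ioo (-1:ℝ) 1), h y)
          + (f x * (Real.log (1+x) - Real.log (1-x))
             + (1/x) * ∫ s in Ioo (-1:ℝ) 1, g s / (s - 1/x)) := by
    rintro ε ⟨hε0, hεlt⟩
    have hε1 : ε < 1 - x := lt_of_lt_of_le hεlt (min_le_left _ _)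
    have hε2 : ε < 1 + x := lt_of_lt_of_le hεlt (min_le_right _ _)
    have hSset : {y : ℝ | ε < |y - x|} ∩ Ioo (-1:ℝ) 1 = Ioo (-1) (x-ε) ∪ Ioo (x+ε) 1 := by
      ext y
      simp only [mem_inter_iff, mem_setOf_eq, mem_Ioo, mem_union, lt_abs, neg_sub]
      constructor
      · rintro ⟨hc | hc, hy1, hy2⟩
        · right; exact ⟨by linarith, hy2⟩
        · left; exact ⟨hy1, by linarith⟩
      · rintro (⟨hy1, hy2⟩ | ⟨hy1, hy2⟩)
        · exact ⟨Or.inr (by linarith), hy1, by linarith⟩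
        · exact ⟨Or.inl (by linarith), by linarith, hy2⟩
    have hae : ({y : ℝ | ε < |y - x|} : Set ℝ)
        =ᵐ[volume] ((({y : ℝ | ε < |y - x|} ∩ Ioo (-1:ℝ) 1) ∪ {y : ℝ | 1 < |y|} : Set ℝ)) := by
      rw [MeasureTheory.ae_eq_set]
      constructor
      · refine measure_mono_null (fun y hy => ?_)
          ((((Set.finite_singleton (1:ℝ)).insert (-1)).countable).measure_zero volume)
        obtain ⟨hyS, hyT⟩ := hy
        have hy1 : ¬ (1 < |y|) := fun hc => hyT (Or.inr hc)
        have hy2 : y ∉ Ioo (-1:ℝ) 1 := fun hc => hyT (Or.inl ⟨hyS, hc⟩)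
        have hy3 := abs_le.1 (not_lt.1 hy1)
        simp only [mem_Ioo, not_and, not_lt] at hy2
        simp only [mem_insert_iff, mem_singleton_iff]
        rcases eq_or_lt_of_le hy3.1 with hc | hc
        · exact Or.inl hc.symm
        · exact Or.inr (le_antisymm hy3.2 (hy2 hc))
      · have hTS : (({y : ℝ | ε < |y - x|} ∩ Ioo (-1:ℝ) 1) ∪ {y : ℝ | 1 < |y|})
            ⊆ {y : ℝ | ε < |y - x|} := by
          rintro y (⟨hy1, _⟩ | hy1)
          · exact hy1
          · simp only [mem_setOf_eq] at hy1 ⊢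
            have habs := abs_sub_abs_le_abs_sub y x
            rcases abs_cases x with ⟨he, _⟩ | ⟨he, _⟩ <;> linarith
        rw [diff_eq_empty.2 hTS]
        exact measure_empty
    have hxyne1 : ∀ y ∈ Icc (-1:ℝ) (x-ε), x - y ≠ 0 := fun y hy => ne_of_gt (by linarith [hy.2])
    have hxyne2 : ∀ y ∈ Icc (x+ε) (1:ℝ), x - y ≠ 0 := fun y hy => ne_of_lt (by linarith [hy.1])
    have hc1 : ContinuousOn (fun y => f y / (x - y)) (Icc (-1:ℝ) (x-ε)) :=
      (hf.continuous.continuousOn).div ((continuous_const.sub continuous_id).continuousOn) hxyne1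
    have hc2 : ContinuousOn (fun y => f y / (x - y)) (Icc (x+ε) (1:ℝ)) :=
      (hf.continuous.continuousOn).div ((continuous_const.sub continuous_id).continuousOn) hxyne2
    have hIntF1 : IntegrableOn (fun y => f y / (x - y)) (Ioo (-1:ℝ) (x-ε)) :=
      hc1.integrableOn_Icc.mono_set Ioo_subset_Icc_self
    have hIntF2 : IntegrableOn (fun y => f y / (x - y)) (Ioo (x+ε) (1:ℝ)) :=
      hc2.integrableOn_Icc.mono_set Ioo_subset_Icc_self
    have hIntFinner : IntegrableOn (fun y => f y / (x - y))
        ({y : ℝ | ε < |y - x|} ∩ Ioo (-1:ℝ) 1) := by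
      rw [hSset]; exact hIntF1.union hIntF2
    have hdisjInner : Disjoint ({y : ℝ | ε < |y - x|} ∩ Ioo (-1:ℝ) 1) {y : ℝ | 1 < |y|} :=
      Set.disjoint_left.2 fun y hy1 hy2 => by
        have hy3 := abs_lt.2 ⟨hy1.2.1, hy1.2.2⟩
        simp only [mem_setOf_eq] at hy2
        linarith
    have step1 : ∫ y in {y : ℝ | ε < |y - x|}, f y / (x - y)
        = (∫ y in ({y : ℝ | ε < |y - x|} ∩ Ioo (-1:ℝ) 1), f y / (x - y))
          + ∫ y in {y : ℝ | 1 < |y|}, f y / (x - y) := by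
      rw [setIntegral_congr_set hae, setIntegral_union hdisjInner hUmeas hIntFinner hIntU]
    have hdisjIoo : Disjoint (Ioo (-1:ℝ) (x-ε)) (Ioo (x+ε) (1:ℝ)) :=
      Set.disjoint_left.2 fun y hy1 hy2 => by
        simp only [mem_Ioo] at hy1 hy2
        linarith
    have hInth1 : IntegrableOn h (Ioo (-1:ℝ) (x-ε)) :=
      hIntI.mono_set (Ioo_subset_Ioo le_rfl (by linarith))
    have hInth2 : IntegrableOn h (Ioo (x+ε) (1:ℝ)) :=
      hIntI.mono_set (Ioo_subset_Ioo (by linarith) le_rfl)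
    have hcone1 : ContinuousOn (fun y : ℝ => 1 / (x - y)) (Icc (-1:ℝ) (x-ε)) :=
      continuousOn_const.div ((continuous_const.sub continuous_id).continuousOn) hxyne1
    have hcone2 : ContinuousOn (fun y : ℝ => 1 / (x - y)) (Icc (x+ε) (1:ℝ)) :=
      continuousOn_const.div ((continuous_const.sub continuous_id).continuousOn) hxyne2
    have hIntone1 : IntegrableOn (fun y : ℝ => 1 / (x - y)) (Ioo (-1:ℝ) (x-ε)) :=
      hcone1.integrableOn_Icc.mono_set Ioo_subset_Icc_self
    have hIntone2 : IntegrableOn (fun y : ℝ => 1 / (x - y)) (Ioo (x+ε) (1:ℝ)) :=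
      hcone2.integrableOn_Icc.mono_set Ioo_subset_Icc_self
    have hlog1 : ∫ y in Ioo (-1:ℝ) (x-ε), (1:ℝ) / (x - y) = Real.log ((x+1)/ε) := by
      rw [← integral_Ioc_eq_integral_Ioo,
        ← intervalIntegral.integral_of_le (by linarith : (-1:ℝ) ≤ x - ε),
        intervalIntegral.integral_comp_sub_left (fun u => 1/u) x,
        show x - (x - ε) = ε by ring, show x - (-1:ℝ) = x + 1 by ring,
        integral_one_div (Set.notMem_uIcc_of_lt hε0 (by linarith))]
    have hlog2 : ∫ y in Ioo (x+ε) (1:ℝ), (1:ℝ) / (x - y) = Real.log (ε/(1-x)) := by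
      rw [← integral_Ioc_eq_integral_Ioo,
        ← intervalIntegral.integral_of_le (by linarith : x + ε ≤ 1),
        intervalIntegral.integral_comp_sub_left (fun u => 1/u) x,
        show x - (1:ℝ) = -(1-x) by ring, show x - (x + ε) = -ε by ring,
        integral_one_div (Set.notMem_uIcc_of_gt (by linarith) (by linarith)),
        show -ε / -(1-x) = ε / (1-x) from neg_div_neg_eq ε (1-x)]
    have e1 : ∫ y in Ioo (-1:ℝ) (x-ε), f y / (x - y)
        = (∫ y in Ioo (-1:ℝ) (x-ε), h y) + f x * Real.log ((x+1)/ε) := by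
      rw [← hlog1, ← integral_const_mul, ← integral_add hInth1 (hIntone1.const_mul _)]
      exact setIntegral_congr_fun measurableSet_Ioo (fun y _ => by simp only [hh]; ring)
    have e2 : ∫ y in Ioo (x+ε) (1:ℝ), f y / (x - y)
        = (∫ y in Ioo (x+ε) (1:ℝ), h y) + f x * Real.log (ε/(1-x)) := by
      rw [← hlog2, ← integral_const_mul, ← integral_add hInth2 (hIntone2.const_mul _)]
      exact setIntegral_congr_fun measurableSet_Ioo (fun y _ => by simp only [hh]; ring)
    have hlogsum : Real.log ((x+1)/ε) + Real.log (ε/(1-x))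
        = Real.log (1+x) - Real.log (1-x) := by
      rw [Real.log_div (by linarith : x + 1 ≠ 0) (ne_of_gt hε0),
        Real.log_div (ne_of_gt hε0) (ne_of_gt h1x),
        show x + 1 = 1 + x by ring]
      ring
    have hinner : ∫ y in ({y : ℝ | ε < |y - x|} ∩ Ioo (-1:ℝ) 1), f y / (x - y)
        = (∫ y in ({y : ℝ | ε < |y - x|} ∩ Ioo (-1:ℝ) 1), h y)
          + f x * (Real.log (1+x) - Real.log (1-x)) := by
      rw [hSset, setIntegral_union hdisjIoo measurableSet_Ioo hIntF1 hIntF2,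
        setIntegral_union hdisjIoo measurableSet_Ioo hInth1 hInth2, e1, e2]
      linear_combination (f x) * hlogsum
    rw [step1, hinner, hOuter]
    ring
  -- the truncated inner integrals converge
  set I : ℝ := ∫ y in Ioo (-1:ℝ) 1, h y with hI
  have hkey : ∀ ε : ℝ, 0 < ε →
      ‖(∫ y in ({y : ℝ | ε < |y - x|} ∩ Ioo (-1:ℝ) 1), h y) - I‖ ≤ M * (2*ε) := by
    intro ε hε0
    have hIoo := integral_inter_add_diff (f := h) (μ := volume)
      (s := Ioo (-1:ℝ) 1) (t := {y : ℝ | ε < |y - x|}) (hSmeas ε) hIntI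
    have hbnd : ‖∫ y in Ioo (-1:ℝ) 1 \ {y : ℝ | ε < |y - x|}, h y‖
        ≤ M * (volume (Ioo (-1:ℝ) 1 \ {y : ℝ | ε < |y - x|})).toReal :=
      norm_setIntegral_le_of_norm_le_const
        (lt_of_le_of_lt (measure_mono diff_subset) measure_Ioo_lt_top)
        (fun y hy => by rw [Real.norm_eq_abs]; exact hbound y (Ioo_subset_Icc_self hy.1))
    have hvol : (volume (Ioo (-1:ℝ) 1 \ {y : ℝ | ε < |y - x|})).toReal ≤ 2*ε := by
      have hsub : Ioo (-1:ℝ) 1 \ {y : ℝ | ε < |y - x|} ⊆ Icc (x-ε) (x+ε) := by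
        rintro y ⟨hy1, hy2⟩
        simp only [mem_setOf_eq, not_lt] at hy2
        have hy3 := abs_le.1 hy2
        exact ⟨by linarith [hy3.1], by linarith [hy3.2]⟩
      calc (volume (Ioo (-1:ℝ) 1 \ {y : ℝ | ε < |y - x|})).toReal
          ≤ (volume (Icc (x-ε) (x+ε))).toReal := by
            apply ENNReal.toReal_mono
            · rw [Real.volume_Icc]; exact ENNReal.ofReal_ne_top
            · exact measure_mono hsub
        _ = 2*ε := by
            rw [Real.volume_Icc, ENNReal.toReal_ofReal (by linarith)]; ring
    have hrw : (∫ y in ({y : ℝ | ε < |y - x|} ∩ Ioo (-1:ℝ) 1), h y) - I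
        = - ∫ y in Ioo (-1:ℝ) 1 \ {y : ℝ | ε < |y - x|}, h y := by
      rw [hI, ← hIoo, inter_comm]; ring
    rw [hrw, norm_neg]
    exact le_trans hbnd (mul_le_mul_of_nonneg_left hvol hM0)
  have h0 : Tendsto (fun ε : ℝ => M * (2*ε)) (𝓝[>] (0:ℝ)) (𝓝 0) := by
    have hco : Tendsto (fun ε : ℝ => M * (2*ε)) (𝓝 (0:ℝ)) (𝓝 (M * (2*0))) :=
      (continuous_const.mul (continuous_const.mul continuous_id)).tendsto 0
    simpa using hco.mono_left nhdsWithin_le_nhds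
  have hdiff : Tendsto (fun ε : ℝ =>
      (∫ y in ({y : ℝ | ε < |y - x|} ∩ Ioo (-1:ℝ) 1), h y) - I) (𝓝[>] (0:ℝ)) (𝓝 0) :=
    squeeze_zero_norm' (eventually_nhdsWithin_of_forall (fun ε hε => hkey ε hε)) h0
  have htend : Tendsto (fun ε : ℝ =>
      ∫ y in ({y : ℝ | ε < |y - x|} ∩ Ioo (-1:ℝ) 1), h y) (𝓝[>] (0:ℝ)) (𝓝 I) := by
    have := hdiff.add_const I
    simpa using this
  have htarget : (∫ y in Ioo (-1:ℝ) 1, h y)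
      + (1 / x) * (∫ s in Ioo (-1 : ℝ) 1, (g s - x * f x) / (s - 1 / x))
      = I + (f x * (Real.log (1+x) - Real.log (1-x))
             + (1/x) * ∫ s in Ioo (-1:ℝ) 1, g s / (s - 1/x)) := by
    rw [hRHS, hI]; ring
  rw [htarget]
  exact (htend.add_const _).congr'
    (by
      filter_upwards [Ioo_mem_nhdsGT_of_mem (left_mem_Ico.2 hε₀pos)] with ε hε
      exact (hev ε hε).symm)
end

section
/- For every a > 0 and every x ∈ ℝ, the principal value PV∫_ℝ (1/(a² + y²))·(1/(x−y)) dy exists and equals π·x/(a·(a² + x²)). -/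
open MeasureTheory Filter Set Topology

private lemma pv_aux_integrable (a : ℝ) (ha : 0 < a) :
    Integrable (fun y : ℝ => (a ^ 2 + y ^ 2)⁻¹) := by
  have h := (integrable_inv_one_add_sq.comp_div ha.ne').const_mul (a⁻¹ * a⁻¹)
  refine h.congr (Filter.Eventually.of_forall fun y => ?_)
  have h1 : a ^ 2 + y ^ 2 ≠ 0 := by positivity
  have h2 : (1:ℝ) + (y / a) ^ 2 = (a ^ 2 + y ^ 2) / a ^ 2 := by
    field_simp
  show a⁻¹ * a⁻¹ * ((1:ℝ) + (y / a) ^ 2)⁻¹ = (a ^ 2 + y ^ 2)⁻¹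
  rw [h2, inv_div, div_eq_mul_inv, ← mul_assoc]
  have h3 : a⁻¹ * a⁻¹ * a ^ 2 = 1 := by
    rw [sq]
    field_simp
  rw [h3, one_mul]

private lemma pv_aux_intOn (a x ε : ℝ) (ha : 0 < a) (hε : 0 < ε) {s : Set ℝ}
    (hs : MeasurableSet s) (hdist : ∀ y ∈ s, ε ≤ |x - y|) :
    IntegrableOn (fun y : ℝ => (1 / (a ^ 2 + y ^ 2)) * (1 / (x - y))) s := by
  refine Integrable.mono' (g := fun y : ℝ => ε⁻¹ * (a ^ 2 + y ^ 2)⁻¹)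
    (((pv_aux_integrable a ha).const_mul ε⁻¹).integrableOn) ?_ ?_
  · apply Measurable.aestronglyMeasurable
    exact (measurable_const.div ((measurable_id.pow_const 2).const_add (a ^ 2))).mul
      (measurable_const.div (measurable_const.sub measurable_id))
  · rw [ae_restrict_iff' hs]
    refine Filter.Eventually.of_forall fun y hy => ?_
    have h1 : 0 < a ^ 2 + y ^ 2 := by positivity
    have h2 : ε ≤ |x - y| := hdist y hy
    have heq : ‖(1 / (a ^ 2 + y ^ 2)) * (1 / (x - y))‖
        = |x - y|⁻¹ * (a ^ 2 + y ^ 2)⁻¹ := by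
      rw [norm_mul, Real.norm_eq_abs, Real.norm_eq_abs, one_div, one_div, abs_inv, abs_inv,
        abs_of_pos h1, mul_comm]
    rw [heq]
    refine mul_le_mul_of_nonneg_right ?_ (le_of_lt (inv_pos.2 h1))
    exact one_div_le_one_div_of_le hε h2 |>.trans_eq (one_div _) |>.trans_eq' (one_div _)

private lemma pv_aux_logpart (a x : ℝ) (ha : 0 < a) {l : Filter ℝ}
    (hinv : Tendsto (fun y : ℝ => y⁻¹) l (𝓝 0))
    (hne : ∀ᶠ y in l, y ≠ 0 ∧ y ≠ x) :
    Tendsto (fun y => (1/2) * Real.log (a ^ 2 + y ^ 2) - Real.log (y - x)) l (𝓝 0) := by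
  have h1 : Tendsto (fun y : ℝ => (a ^ 2 * (y⁻¹) ^ 2 + 1) / ((1 - x * y⁻¹) ^ 2)) l (𝓝 1) := by
    have hn : Tendsto (fun y : ℝ => a ^ 2 * (y⁻¹) ^ 2 + 1) l (𝓝 (a ^ 2 * 0 ^ 2 + 1)) :=
      (((hinv.pow 2).const_mul (a ^ 2)).add_const 1)
    have hd : Tendsto (fun y : ℝ => (1 - x * y⁻¹) ^ 2) l (𝓝 ((1 - x * 0) ^ 2)) :=
      ((tendsto_const_nhds.sub (hinv.const_mul x)).pow 2)
    have := hn.div hd (by norm_num)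
    convert this using 2 <;> norm_num
  have h2 : Tendsto (fun y : ℝ => (a ^ 2 + y ^ 2) / (y - x) ^ 2) l (𝓝 1) := by
    refine h1.congr' ?_
    filter_upwards [hne] with y hy
    obtain ⟨hy0, hyx⟩ := hy
    have hsub : y - x ≠ 0 := sub_ne_zero.2 hyx
    field_simp
  have h3 : Tendsto (fun y : ℝ => Real.log ((a ^ 2 + y ^ 2) / (y - x) ^ 2)) l (𝓝 0) := by
    have := (Real.continuousAt_log (by norm_num : (1:ℝ) ≠ 0)).tendsto.comp h2
    rw [Real.log_one] at this; exact this
  have h4 := h3.const_mul (1/2 : ℝ)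
  rw [mul_zero] at h4
  refine h4.congr' ?_
  filter_upwards [hne] with y hy
  obtain ⟨hy0, hyx⟩ := hy
  have h5 : a ^ 2 + y ^ 2 ≠ 0 := by positivity
  have h6 : (y - x) ^ 2 ≠ 0 := pow_ne_zero 2 (sub_ne_zero.2 hyx)
  rw [Real.log_div h5 h6, Real.log_pow]
  push_cast
  ring

set_option maxHeartbeats 1000000 in
/-- For every `a > 0` and every `x ∈ ℝ`, the principal value
`PV∫_ℝ (1/(a² + y²))·(1/(x−y)) dy` exists and equals `π·x/(a·(a² + x²))`. -/
theorem pv_lorentzian (a : ℝ) (ha : 0 < a) (x : ℝ) :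
    Tendsto
      (fun ε : ℝ => ∫ y in {y : ℝ | ε < |y - x|}, (1 / (a ^ 2 + y ^ 2)) * (1 / (x - y)))
      (𝓝[>] 0)
      (𝓝 (Real.pi * x / (a * (a ^ 2 + x ^ 2)))) := by
  have ha2 : ∀ y : ℝ, 0 < a ^ 2 + y ^ 2 := fun y => by positivity
  have hax : (0:ℝ) < a ^ 2 + x ^ 2 := ha2 x
  set c : ℝ := (a ^ 2 + x ^ 2)⁻¹ with hc
  set F : ℝ → ℝ := fun y => c * ((1/2) * Real.log (a ^ 2 + y ^ 2)
      + (x / a) * Real.arctan (y / a) - Real.log (y - x)) with hFdef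
  -- derivative of F
  have hF : ∀ y : ℝ, y ≠ x →
      HasDerivAt F ((1 / (a ^ 2 + y ^ 2)) * (1 / (x - y))) y := by
    intro y hy
    have h1 : HasDerivAt (fun y : ℝ => a ^ 2 + y ^ 2) (2 * y) y := by
      simpa using (hasDerivAt_pow 2 y).const_add (a ^ 2)
    have h2 : HasDerivAt (fun y : ℝ => Real.log (a ^ 2 + y ^ 2)) (2 * y / (a ^ 2 + y ^ 2)) y :=
      h1.log (ha2 y).ne'
    have h3 : HasDerivAt (fun y : ℝ => Real.arctan (y / a)) (1 / (1 + (y / a) ^ 2) * (1 / a)) y := by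
      have := (Real.hasDerivAt_arctan (y / a)).comp y ((hasDerivAt_id y).div_const a)
      exact this
    have h4 : HasDerivAt (fun y : ℝ => Real.log (y - x)) (y - x)⁻¹ y := by
      have := (Real.hasDerivAt_log (sub_ne_zero.2 hy)).comp y ((hasDerivAt_id y).sub_const x)
      rw [mul_one] at this; exact this
    have h5 := (((h2.const_mul (1/2 : ℝ)).add (h3.const_mul (x / a))).sub h4).const_mul c
    refine HasDerivAt.congr_deriv h5 ?_
    have hya : 1 + (y / a) ^ 2 ≠ 0 := by positivity
    have hyx : y - x ≠ 0 := sub_ne_zero.2 hy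
    have hxy : x - y ≠ 0 := sub_ne_zero.2 (Ne.symm hy)
    rw [hc]
    field_simp
    ring
  -- limit at +infinity
  have hTop : Tendsto F atTop (𝓝 (c * ((x / a) * (Real.pi / 2)))) := by
    have harc : Tendsto (fun y : ℝ => Real.arctan (y / a)) atTop (𝓝 (Real.pi / 2)) := by
      have hdiv : Tendsto (fun y : ℝ => y / a) atTop atTop :=
      Tendsto.atTop_div_const ha (tendsto_id : Tendsto (fun y : ℝ => y) atTop atTop)
      exact tendsto_nhds_of_tendsto_nhdsWithin (Real.tendsto_arctan_atTop.comp hdiv)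
    have hlog := pv_aux_logpart a x ha tendsto_inv_atTop_zero
      (by filter_upwards [eventually_gt_atTop (max 0 x)] with y hy;
          exact ⟨ne_of_gt (lt_of_le_of_lt (le_max_left 0 x) hy),
                 ne_of_gt (lt_of_le_of_lt (le_max_right 0 x) hy)⟩)
    have h := (hlog.add (harc.const_mul (x / a))).const_mul c
    rw [zero_add] at h
    refine h.congr fun y => ?_
    simp only [hFdef]
    ring
  -- limit at -infinity
  have hBot : Tendsto F atBot (𝓝 (c * ((x / a) * (-(Real.pi / 2))))) := by
    have hdiv : Tendsto (fun y : ℝ => y / a) atBot atBot :=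
      Tendsto.atBot_div_const ha (tendsto_id : Tendsto (fun y : ℝ => y) atBot atBot)
    have harc : Tendsto (fun y : ℝ => Real.arctan (y / a)) atBot (𝓝 (-(Real.pi / 2))) :=
      tendsto_nhds_of_tendsto_nhdsWithin (Real.tendsto_arctan_atBot.comp hdiv)
    have hinvbot : Tendsto (fun y : ℝ => y⁻¹) atBot (𝓝 0) := by
      have := (tendsto_inv_atTop_zero.comp
        (tendsto_neg_atBot_atTop : Tendsto (fun y : ℝ => -y) atBot atTop)).neg
      rw [neg_zero] at this
      refine this.congr fun y => ?_
      show -(-y)⁻¹ = y⁻¹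
      rw [inv_neg, neg_neg]
    have hlog := pv_aux_logpart a x ha hinvbot
      (by filter_upwards [eventually_lt_atBot (min 0 x)] with y hy;
          exact ⟨ne_of_lt (lt_of_lt_of_le hy (min_le_left 0 x)),
                 ne_of_lt (lt_of_lt_of_le hy (min_le_right 0 x))⟩)
    have h := (hlog.add (harc.const_mul (x / a))).const_mul c
    rw [zero_add] at h
    refine h.congr fun y => ?_
    simp only [hFdef]
    ring
  -- key computation for each ε > 0
  have key : ∀ ε : ℝ, 0 < ε →
      (∫ y in {y : ℝ | ε < |y - x|}, (1 / (a ^ 2 + y ^ 2)) * (1 / (x - y)))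
        = F (x - ε) - F (x + ε) + c * ((x / a) * Real.pi) := by
    intro ε hε
    have hset : {y : ℝ | ε < |y - x|} = Iio (x - ε) ∪ Ioi (x + ε) := by
      ext y
      simp only [mem_setOf_eq, mem_union, mem_Iio, mem_Ioi, lt_abs]
      constructor
      · rintro (h | h)
        · exact Or.inr (by linarith)
        · exact Or.inl (by linarith)
      · rintro (h | h)
        · exact Or.inr (by linarith)
        · exact Or.inl (by linarith)
    have hdisj : Disjoint (Iio (x - ε)) (Ioi (x + ε)) := by
      refine Set.disjoint_left.mpr fun y h1 h2 => ?_
      simp only [mem_Iio, mem_Ioi] at h1 h2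
      linarith
    have hInt1 : IntegrableOn (fun y : ℝ => (1 / (a ^ 2 + y ^ 2)) * (1 / (x - y))) (Iic (x - ε)) :=
      pv_aux_intOn a x ε ha hε measurableSet_Iic
        (fun y hy => by
          simp only [mem_Iic] at hy
          rw [abs_of_pos (by linarith)]
          linarith)
    have hInt1' : IntegrableOn (fun y : ℝ => (1 / (a ^ 2 + y ^ 2)) * (1 / (x - y))) (Iio (x - ε)) :=
      hInt1.mono_set Iio_subset_Iic_self
    have hInt2 : IntegrableOn (fun y : ℝ => (1 / (a ^ 2 + y ^ 2)) * (1 / (x - y))) (Ioi (x + ε)) :=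
      pv_aux_intOn a x ε ha hε measurableSet_Ioi
        (fun y hy => by
          simp only [mem_Ioi] at hy
          rw [abs_of_neg (by linarith)]
          linarith)
    rw [hset, setIntegral_union hdisj measurableSet_Ioi hInt1' hInt2,
        setIntegral_congr_set Iio_ae_eq_Iic]
    have hder1 : ∀ y ∈ Iic (x - ε),
        HasDerivAt F ((1 / (a ^ 2 + y ^ 2)) * (1 / (x - y))) y := by
      intro y hy
      simp only [mem_Iic] at hy
      exact hF y (by intro h; rw [h] at hy; linarith)
    have hder2 : ∀ y ∈ Ici (x + ε),
        HasDerivAt F ((1 / (a ^ 2 + y ^ 2)) * (1 / (x - y))) y := by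
      intro y hy
      simp only [mem_Ici] at hy
      exact hF y (by intro h; rw [h] at hy; linarith)
    rw [integral_Iic_of_hasDerivAt_of_tendsto' hder1 hInt1 hBot,
        integral_Ioi_of_hasDerivAt_of_tendsto' hder2 hInt2 hTop]
    ring
  -- the log ε terms cancel
  set G : ℝ → ℝ := fun y => c * ((1/2) * Real.log (a ^ 2 + y ^ 2)
      + (x / a) * Real.arctan (y / a)) with hGdef
  have hFG : ∀ ε : ℝ, F (x - ε) - F (x + ε) = G (x - ε) - G (x + ε) := by
    intro ε
    simp only [hFdef, hGdef]
    rw [show x - ε - x = -(x + ε - x) by ring, Real.log_neg_eq_log]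
    ring
  have hGcont : Continuous G := by
    apply continuous_const.mul
    refine Continuous.add ?_ ?_
    · exact continuous_const.mul ((continuous_const.add (continuous_pow 2)).log
        (fun y => (ha2 y).ne'))
    · exact continuous_const.mul (Real.continuous_arctan.comp (continuous_id.div_const a))
  have hlim : Tendsto (fun ε : ℝ => G (x - ε) - G (x + ε) + c * ((x / a) * Real.pi))
      (𝓝 0) (𝓝 (Real.pi * x / (a * (a ^ 2 + x ^ 2)))) := by
    have h1 : Continuous (fun ε : ℝ => G (x - ε) - G (x + ε) + c * ((x / a) * Real.pi)) :=
      ((hGcont.comp (continuous_const.sub continuous_id)).sub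
        (hGcont.comp (continuous_const.add continuous_id))).add continuous_const
    refine h1.tendsto' 0 _ ?_
    rw [show x - 0 = x by ring, show x + 0 = x by ring, sub_self, zero_add, hc]
    field_simp
  refine Tendsto.congr' ?_ (hlim.mono_left nhdsWithin_le_nhds)
  filter_upwards [self_mem_nhdsWithin] with ε hε
  rw [key ε hε, hFG ε]
end

section
/- For every x ∈ ℝ, the principal value PV∫_ℝ (1/(1 + y⁴))·(1/(x−y)) dy exists and equals π·x·(1 + x²)/(√2·(1 + x⁴)). -/
open MeasureTheory Filter Set Topology

noncomputable def pvC (x y : ℝ) : ℝ :=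
  (x ^ 3 - x) / 4 *
      (Real.log (y ^ 2 + Real.sqrt 2 * y + 1) - Real.log (y ^ 2 - Real.sqrt 2 * y + 1)) +
    (x ^ 3 + x) / 2 *
      (Real.arctan (Real.sqrt 2 * y + 1) + Real.arctan (Real.sqrt 2 * y - 1)) +
    Real.sqrt 2 * (x ^ 2 / 2) * Real.arctan (y ^ 2) +
    Real.sqrt 2 / 4 * Real.log (1 + y ^ 4)

noncomputable def pvF (x y : ℝ) : ℝ := pvC x y - Real.sqrt 2 * Real.log (x - y)

lemma pv_p_pos (y : ℝ) : 0 < y ^ 2 + Real.sqrt 2 * y + 1 := by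
  nlinarith [Real.sq_sqrt (by norm_num : (2:ℝ) ≥ 0), sq_nonneg (2 * y + Real.sqrt 2)]

lemma pv_q_pos (y : ℝ) : 0 < y ^ 2 - Real.sqrt 2 * y + 1 := by
  nlinarith [Real.sq_sqrt (by norm_num : (2:ℝ) ≥ 0), sq_nonneg (2 * y - Real.sqrt 2)]

lemma hasDerivAt_pvC (x y : ℝ) :
    HasDerivAt (pvC x)
      (Real.sqrt 2 * (x ^ 3 + x ^ 2 * y + x * y ^ 2 + y ^ 3) / (1 + y ^ 4)) y := by
  have hs : Real.sqrt 2 ^ 2 = 2 := Real.sq_sqrt (by norm_num)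
  have hp := pv_p_pos y
  have hq := pv_q_pos y
  have dp : HasDerivAt (fun y : ℝ => y ^ 2 + Real.sqrt 2 * y + 1) (2 * y + Real.sqrt 2) y := by
    simpa using ((hasDerivAt_pow 2 y).add ((hasDerivAt_id y).const_mul (Real.sqrt 2))).add_const 1
  have dq : HasDerivAt (fun y : ℝ => y ^ 2 - Real.sqrt 2 * y + 1) (2 * y - Real.sqrt 2) y := by
    simpa using ((hasDerivAt_pow 2 y).sub ((hasDerivAt_id y).const_mul (Real.sqrt 2))).add_const 1
  have hlp := dp.log hp.ne'
  have hlq := dq.log hq.ne'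
  have da1 : HasDerivAt (fun y : ℝ => Real.arctan (Real.sqrt 2 * y + 1))
      (1 / (1 + (Real.sqrt 2 * y + 1) ^ 2) * Real.sqrt 2) y := by
    have hlin : HasDerivAt (fun y : ℝ => Real.sqrt 2 * y + 1) (Real.sqrt 2) y := by
      simpa using ((hasDerivAt_id y).const_mul (Real.sqrt 2)).add_const 1
    exact hlin.arctan
  have da2 : HasDerivAt (fun y : ℝ => Real.arctan (Real.sqrt 2 * y - 1))
      (1 / (1 + (Real.sqrt 2 * y - 1) ^ 2) * Real.sqrt 2) y := by
    have hlin : HasDerivAt (fun y : ℝ => Real.sqrt 2 * y - 1) (Real.sqrt 2) y := by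
      simpa using ((hasDerivAt_id y).const_mul (Real.sqrt 2)).sub_const 1
    exact hlin.arctan
  have da3 : HasDerivAt (fun y : ℝ => Real.arctan (y ^ 2))
      (1 / (1 + (y ^ 2) ^ 2) * (2 * y)) y := by
    have h2 : HasDerivAt (fun y : ℝ => y ^ 2) (2 * y) y := by simpa using hasDerivAt_pow 2 y
    exact h2.arctan
  have dl4 : HasDerivAt (fun y : ℝ => Real.log (1 + y ^ 4)) (4 * y ^ 3 / (1 + y ^ 4)) y := by
    have h4 : HasDerivAt (fun y : ℝ => 1 + y ^ 4) (4 * y ^ 3) y := by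
      simpa using (hasDerivAt_pow 4 y).const_add 1
    exact h4.log (by positivity)
  have H := ((((hlp.sub hlq).const_mul ((x ^ 3 - x) / 4)).add
      ((da1.add da2).const_mul ((x ^ 3 + x) / 2))).add
        (da3.const_mul (Real.sqrt 2 * (x ^ 2 / 2)))).add (dl4.const_mul (Real.sqrt 2 / 4))
  have heq : (x ^ 3 - x) / 4 * ((2 * y + Real.sqrt 2) / (y ^ 2 + Real.sqrt 2 * y + 1) -
        (2 * y - Real.sqrt 2) / (y ^ 2 - Real.sqrt 2 * y + 1)) +
      (x ^ 3 + x) / 2 * (1 / (1 + (Real.sqrt 2 * y + 1) ^ 2) * Real.sqrt 2 +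
        1 / (1 + (Real.sqrt 2 * y - 1) ^ 2) * Real.sqrt 2) +
      Real.sqrt 2 * (x ^ 2 / 2) * (1 / (1 + (y ^ 2) ^ 2) * (2 * y)) +
      Real.sqrt 2 / 4 * (4 * y ^ 3 / (1 + y ^ 4)) =
      Real.sqrt 2 * (x ^ 3 + x ^ 2 * y + x * y ^ 2 + y ^ 3) / (1 + y ^ 4) := by
    have h2p : 1 + (Real.sqrt 2 * y + 1) ^ 2 = 2 * (y ^ 2 + Real.sqrt 2 * y + 1) := by
      linear_combination y ^ 2 * hs
    have h2q : 1 + (Real.sqrt 2 * y - 1) ^ 2 = 2 * (y ^ 2 - Real.sqrt 2 * y + 1) := by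
      linear_combination y ^ 2 * hs
    have hpq : 1 + y ^ 4 =
        (y ^ 2 + Real.sqrt 2 * y + 1) * (y ^ 2 - Real.sqrt 2 * y + 1) := by
      linear_combination y ^ 2 * hs
    have h44 : 1 + (y ^ 2) ^ 2 =
        (y ^ 2 + Real.sqrt 2 * y + 1) * (y ^ 2 - Real.sqrt 2 * y + 1) := by
      linear_combination y ^ 2 * hs
    rw [h2p, h2q, h44, hpq]
    have hp2 : y * (y + Real.sqrt 2) + 1 ≠ 0 := by convert hp.ne' using 1; ring
    have hq2 : y * (y - Real.sqrt 2) + 1 ≠ 0 := by convert hq.ne' using 1; ring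
    field_simp
    ring
  exact heq ▸ H


lemma hasDerivAt_pvF (x : ℝ) {y : ℝ} (hxy : y ≠ x) :
    HasDerivAt (pvF x)
      (Real.sqrt 2 * (1 + x ^ 4) * (1 / (1 + y ^ 4) * (1 / (x - y)))) y := by
  have hxy' : x - y ≠ 0 := sub_ne_zero.mpr (Ne.symm hxy)
  have hlog : HasDerivAt (fun y : ℝ => Real.log (x - y)) (-(1 / (x - y))) y := by
    have h1 : HasDerivAt (fun y : ℝ => x - y) (-1) y := by
      simpa using (hasDerivAt_id y).const_sub x
    have := h1.log hxy'
    simpa [neg_div] using this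
  have H := (hasDerivAt_pvC x y).sub (hlog.const_mul (Real.sqrt 2))
  have heq : Real.sqrt 2 * (x ^ 3 + x ^ 2 * y + x * y ^ 2 + y ^ 3) / (1 + y ^ 4) -
      Real.sqrt 2 * -(1 / (x - y)) =
      Real.sqrt 2 * (1 + x ^ 4) * (1 / (1 + y ^ 4) * (1 / (x - y))) := by
    have h4 : (0:ℝ) < 1 + y ^ 4 := by positivity
    field_simp
    ring
  exact heq ▸ H

lemma tendsto_inv_atBot_zero' : Tendsto (fun y : ℝ => y⁻¹) atBot (𝓝 0) := by
  have h := (tendsto_inv_atTop_zero (𝕜 := ℝ)).comp tendsto_neg_atBot_atTop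
  have h2 := h.neg
  simpa [Function.comp, inv_neg] using h2

lemma tendsto_pvF_atTop (x : ℝ) :
    Tendsto (pvF x) atTop
      (𝓝 ((x ^ 3 + x) / 2 * (Real.pi / 2 + Real.pi / 2) +
        Real.sqrt 2 * (x ^ 2 / 2) * (Real.pi / 2))) := by
  have hinv : Tendsto (fun y : ℝ => y⁻¹) atTop (𝓝 0) := tendsto_inv_atTop_zero
  -- part A : log ratio → 0
  have hr : Tendsto (fun y : ℝ =>
      (y ^ 2 + Real.sqrt 2 * y + 1) / (y ^ 2 - Real.sqrt 2 * y + 1)) atTop (𝓝 1) := by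
    have hnum : Tendsto (fun y : ℝ => 1 + Real.sqrt 2 * y⁻¹ + y⁻¹ * y⁻¹) atTop
        (𝓝 (1 + Real.sqrt 2 * 0 + 0 * 0)) :=
      (tendsto_const_nhds.add (hinv.const_mul _)).add (hinv.mul hinv)
    have hden : Tendsto (fun y : ℝ => 1 - Real.sqrt 2 * y⁻¹ + y⁻¹ * y⁻¹) atTop
        (𝓝 (1 - Real.sqrt 2 * 0 + 0 * 0)) :=
      (tendsto_const_nhds.sub (hinv.const_mul _)).add (hinv.mul hinv)
    have h := hnum.div hden (by norm_num)
    norm_num at h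
    apply h.congr'
    filter_upwards [eventually_ne_atTop (0:ℝ)] with y hy
    simp only [Pi.div_apply]
    have hq := pv_q_pos y
    have hden0 : 1 - Real.sqrt 2 * y⁻¹ + y⁻¹ * y⁻¹ ≠ 0 := by
      have : 1 - Real.sqrt 2 * y⁻¹ + y⁻¹ * y⁻¹ = (y ^ 2 - Real.sqrt 2 * y + 1) / y ^ 2 := by
        field_simp
      rw [this]
      exact div_ne_zero hq.ne' (pow_ne_zero 2 hy)
    rw [div_eq_div_iff hden0 hq.ne']
    field_simp
  have hA : Tendsto (fun y : ℝ => (x ^ 3 - x) / 4 *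
      (Real.log (y ^ 2 + Real.sqrt 2 * y + 1) - Real.log (y ^ 2 - Real.sqrt 2 * y + 1)))
      atTop (𝓝 0) := by
    have hlog := (Real.continuousAt_log one_ne_zero).tendsto.comp hr
    rw [Real.log_one] at hlog
    have hlog' : Tendsto (fun y : ℝ =>
        Real.log (y ^ 2 + Real.sqrt 2 * y + 1) - Real.log (y ^ 2 - Real.sqrt 2 * y + 1))
        atTop (𝓝 0) := by
      apply hlog.congr
      intro y
      exact Real.log_div (pv_p_pos y).ne' (pv_q_pos y).ne'
    simpa using hlog'.const_mul ((x ^ 3 - x) / 4)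
  -- part B : arctans
  have harct : ∀ c : ℝ, Tendsto (fun y : ℝ => Real.arctan (Real.sqrt 2 * y + c)) atTop
      (𝓝 (Real.pi / 2)) := by
    intro c
    have hl : Tendsto (fun y : ℝ => Real.sqrt 2 * y + c) atTop atTop :=
      tendsto_atTop_add_const_right _ c
        (tendsto_id.const_mul_atTop (Real.sqrt_pos.mpr (by norm_num)))
    exact (Real.tendsto_arctan_atTop.mono_right nhdsWithin_le_nhds).comp hl
  have hB : Tendsto (fun y : ℝ => (x ^ 3 + x) / 2 *
      (Real.arctan (Real.sqrt 2 * y + 1) + Real.arctan (Real.sqrt 2 * y - 1)))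
      atTop (𝓝 ((x ^ 3 + x) / 2 * (Real.pi / 2 + Real.pi / 2))) := by
    have h2 : Tendsto (fun y : ℝ => Real.arctan (Real.sqrt 2 * y - 1)) atTop
        (𝓝 (Real.pi / 2)) := by
      have := harct (-1); simpa [sub_eq_add_neg] using this
    exact ((harct 1).add h2).const_mul _
  have hC : Tendsto (fun y : ℝ => Real.sqrt 2 * (x ^ 2 / 2) * Real.arctan (y ^ 2)) atTop
      (𝓝 (Real.sqrt 2 * (x ^ 2 / 2) * (Real.pi / 2))) := by
    have hsq : Tendsto (fun y : ℝ => y ^ 2) atTop atTop := tendsto_pow_atTop two_ne_zero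
    exact (((Real.tendsto_arctan_atTop.mono_right nhdsWithin_le_nhds).comp hsq).const_mul _)
  -- part D : log tail → 0
  have hD : Tendsto (fun y : ℝ =>
      Real.sqrt 2 / 4 * Real.log (1 + y ^ 4) - Real.sqrt 2 * Real.log (x - y)) atTop (𝓝 0) := by
    have hrat : Tendsto (fun y : ℝ => (1 + y ^ 4) / (y - x) ^ 4) atTop (𝓝 1) := by
      have hnum : Tendsto (fun y : ℝ => y⁻¹ * y⁻¹ * (y⁻¹ * y⁻¹) + 1) atTop
          (𝓝 (0 * 0 * (0 * 0) + 1)) := (((hinv.mul hinv).mul (hinv.mul hinv)).add_const 1)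
      have hden : Tendsto (fun y : ℝ => (1 - x * y⁻¹) ^ 4) atTop (𝓝 ((1 - x * 0) ^ 4)) :=
        (tendsto_const_nhds.sub (hinv.const_mul x)).pow 4
      have h := hnum.div hden (by norm_num)
      norm_num at h
      apply h.congr'
      filter_upwards [eventually_gt_atTop x, eventually_gt_atTop (0:ℝ)] with y hy hy0
      simp only [Pi.div_apply]
      have hyx : y - x ≠ 0 := sub_ne_zero.mpr (ne_of_gt hy)
      have hden0 : (1 - x * y⁻¹) ^ 4 ≠ 0 := by
        apply pow_ne_zero
        have : 1 - x * y⁻¹ = (y - x) / y := by field_simp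
        rw [this]
        exact div_ne_zero hyx hy0.ne'
      rw [div_eq_div_iff hden0 (pow_ne_zero 4 hyx)]
      field_simp
    have hlog := (Real.continuousAt_log one_ne_zero).tendsto.comp hrat
    rw [Real.log_one] at hlog
    have := hlog.const_mul (Real.sqrt 2 / 4)
    rw [mul_zero] at this
    apply this.congr'
    filter_upwards [eventually_gt_atTop x, eventually_gt_atTop (0:ℝ)] with y hy hy0
    simp only [Function.comp_apply]
    have hyx : y - x > 0 := sub_pos.mpr hy
    have h4 : (0:ℝ) < 1 + y ^ 4 := by positivity
    rw [Real.log_div h4.ne' (pow_ne_zero 4 hyx.ne'), Real.log_pow,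
      show x - y = -(y - x) by ring, Real.log_neg_eq_log]
    push_cast
    ring
  have := ((hA.add hB).add hC).add hD
  rw [show (0:ℝ) + (x ^ 3 + x) / 2 * (Real.pi / 2 + Real.pi / 2) +
      Real.sqrt 2 * (x ^ 2 / 2) * (Real.pi / 2) + 0 =
      (x ^ 3 + x) / 2 * (Real.pi / 2 + Real.pi / 2) +
      Real.sqrt 2 * (x ^ 2 / 2) * (Real.pi / 2) from by ring] at this
  apply this.congr
  intro y
  simp only [pvF, pvC]
  ring

lemma tendsto_pvF_atBot (x : ℝ) :
    Tendsto (pvF x) atBot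
      (𝓝 ((x ^ 3 + x) / 2 * (-(Real.pi / 2) + -(Real.pi / 2)) +
        Real.sqrt 2 * (x ^ 2 / 2) * (Real.pi / 2))) := by
  have hinv : Tendsto (fun y : ℝ => y⁻¹) atBot (𝓝 0) := tendsto_inv_atBot_zero'
  have hr : Tendsto (fun y : ℝ =>
      (y ^ 2 + Real.sqrt 2 * y + 1) / (y ^ 2 - Real.sqrt 2 * y + 1)) atBot (𝓝 1) := by
    have hnum : Tendsto (fun y : ℝ => 1 + Real.sqrt 2 * y⁻¹ + y⁻¹ * y⁻¹) atBot
        (𝓝 (1 + Real.sqrt 2 * 0 + 0 * 0)) :=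
      (tendsto_const_nhds.add (hinv.const_mul _)).add (hinv.mul hinv)
    have hden : Tendsto (fun y : ℝ => 1 - Real.sqrt 2 * y⁻¹ + y⁻¹ * y⁻¹) atBot
        (𝓝 (1 - Real.sqrt 2 * 0 + 0 * 0)) :=
      (tendsto_const_nhds.sub (hinv.const_mul _)).add (hinv.mul hinv)
    have h := hnum.div hden (by norm_num)
    norm_num at h
    apply h.congr'
    filter_upwards [eventually_ne_atBot (0:ℝ)] with y hy
    simp only [Pi.div_apply]
    have hq := pv_q_pos y
    have hden0 : 1 - Real.sqrt 2 * y⁻¹ + y⁻¹ * y⁻¹ ≠ 0 := by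
      have : 1 - Real.sqrt 2 * y⁻¹ + y⁻¹ * y⁻¹ = (y ^ 2 - Real.sqrt 2 * y + 1) / y ^ 2 := by
        field_simp
      rw [this]
      exact div_ne_zero hq.ne' (pow_ne_zero 2 hy)
    rw [div_eq_div_iff hden0 hq.ne']
    field_simp
  have hA : Tendsto (fun y : ℝ => (x ^ 3 - x) / 4 *
      (Real.log (y ^ 2 + Real.sqrt 2 * y + 1) - Real.log (y ^ 2 - Real.sqrt 2 * y + 1)))
      atBot (𝓝 0) := by
    have hlog := (Real.continuousAt_log one_ne_zero).tendsto.comp hr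
    rw [Real.log_one] at hlog
    have hlog' : Tendsto (fun y : ℝ =>
        Real.log (y ^ 2 + Real.sqrt 2 * y + 1) - Real.log (y ^ 2 - Real.sqrt 2 * y + 1))
        atBot (𝓝 0) := by
      apply hlog.congr
      intro y
      exact Real.log_div (pv_p_pos y).ne' (pv_q_pos y).ne'
    simpa using hlog'.const_mul ((x ^ 3 - x) / 4)
  have harct : ∀ c : ℝ, Tendsto (fun y : ℝ => Real.arctan (Real.sqrt 2 * y + c)) atBot
      (𝓝 (-(Real.pi / 2))) := by
    intro c
    have hl : Tendsto (fun y : ℝ => Real.sqrt 2 * y + c) atBot atBot :=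
      tendsto_atBot_add_const_right _ c
        (tendsto_id.const_mul_atBot (Real.sqrt_pos.mpr (by norm_num)))
    exact (Real.tendsto_arctan_atBot.mono_right nhdsWithin_le_nhds).comp hl
  have hB : Tendsto (fun y : ℝ => (x ^ 3 + x) / 2 *
      (Real.arctan (Real.sqrt 2 * y + 1) + Real.arctan (Real.sqrt 2 * y - 1)))
      atBot (𝓝 ((x ^ 3 + x) / 2 * (-(Real.pi / 2) + -(Real.pi / 2)))) := by
    have h2 : Tendsto (fun y : ℝ => Real.arctan (Real.sqrt 2 * y - 1)) atBot
        (𝓝 (-(Real.pi / 2))) := by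
      have := harct (-1); simpa [sub_eq_add_neg] using this
    exact ((harct 1).add h2).const_mul _
  have hC : Tendsto (fun y : ℝ => Real.sqrt 2 * (x ^ 2 / 2) * Real.arctan (y ^ 2)) atBot
      (𝓝 (Real.sqrt 2 * (x ^ 2 / 2) * (Real.pi / 2))) := by
    have hsq : Tendsto (fun y : ℝ => y ^ 2) atBot atTop := by
      have h := (tendsto_pow_atTop (α := ℝ) two_ne_zero).comp tendsto_neg_atBot_atTop
      apply h.congr
      intro y
      simp
    exact (((Real.tendsto_arctan_atTop.mono_right nhdsWithin_le_nhds).comp hsq).const_mul _)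
  have hD : Tendsto (fun y : ℝ =>
      Real.sqrt 2 / 4 * Real.log (1 + y ^ 4) - Real.sqrt 2 * Real.log (x - y)) atBot (𝓝 0) := by
    have hrat : Tendsto (fun y : ℝ => (1 + y ^ 4) / (x - y) ^ 4) atBot (𝓝 1) := by
      have hnum : Tendsto (fun y : ℝ => y⁻¹ * y⁻¹ * (y⁻¹ * y⁻¹) + 1) atBot
          (𝓝 (0 * 0 * (0 * 0) + 1)) := (((hinv.mul hinv).mul (hinv.mul hinv)).add_const 1)
      have hden : Tendsto (fun y : ℝ => (x * y⁻¹ - 1) ^ 4) atBot (𝓝 ((x * 0 - 1) ^ 4)) :=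
        ((hinv.const_mul x).sub tendsto_const_nhds).pow 4
      have h := hnum.div hden (by norm_num)
      norm_num at h
      apply h.congr'
      filter_upwards [eventually_lt_atBot x, eventually_lt_atBot (0:ℝ)] with y hy hy0
      simp only [Pi.div_apply]
      have hxy : x - y ≠ 0 := sub_ne_zero.mpr (ne_of_gt hy)
      have hyne : y ≠ 0 := hy0.ne
      have hden0 : (x * y⁻¹ - 1) ^ 4 ≠ 0 := by
        apply pow_ne_zero
        have : x * y⁻¹ - 1 = (x - y) / y := by field_simp
        rw [this]
        exact div_ne_zero hxy hy0.ne
      rw [div_eq_div_iff hden0 (pow_ne_zero 4 hxy)]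
      field_simp
    have hlog := (Real.continuousAt_log one_ne_zero).tendsto.comp hrat
    rw [Real.log_one] at hlog
    have := hlog.const_mul (Real.sqrt 2 / 4)
    rw [mul_zero] at this
    apply this.congr'
    filter_upwards [eventually_lt_atBot x, eventually_lt_atBot (0:ℝ)] with y hy hy0
    simp only [Function.comp_apply]
    have hxy : x - y > 0 := sub_pos.mpr hy
    have h4 : (0:ℝ) < 1 + y ^ 4 := by positivity
    rw [Real.log_div h4.ne' (pow_ne_zero 4 hxy.ne'), Real.log_pow]
    push_cast
    ring
  have := ((hA.add hB).add hC).add hD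
  rw [show (0:ℝ) + (x ^ 3 + x) / 2 * (-(Real.pi / 2) + -(Real.pi / 2)) +
      Real.sqrt 2 * (x ^ 2 / 2) * (Real.pi / 2) + 0 =
      (x ^ 3 + x) / 2 * (-(Real.pi / 2) + -(Real.pi / 2)) +
      Real.sqrt 2 * (x ^ 2 / 2) * (Real.pi / 2) from by ring] at this
  apply this.congr
  intro y
  simp only [pvF, pvC]
  ring

lemma pv_integrable_quartic : Integrable (fun y : ℝ => 1 / (1 + y ^ 4)) := by
  apply Integrable.mono' (integrable_inv_one_add_sq.const_mul 2)
  · apply Continuous.aestronglyMeasurable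
    apply Continuous.div continuous_const (by continuity)
    intro y; positivity
  · filter_upwards with y
    have h4 : (0:ℝ) < 1 + y ^ 4 := by positivity
    have h2 : (0:ℝ) < 1 + y ^ 2 := by positivity
    rw [Real.norm_eq_abs, abs_of_pos (by positivity)]
    rw [show (2:ℝ) * (1 + y ^ 2)⁻¹ = 2 / (1 + y ^ 2) from by rw [div_eq_mul_inv]]
    rw [div_le_div_iff₀ h4 h2]
    nlinarith [sq_nonneg (y ^ 2 - 1), sq_nonneg y, sq_nonneg (y ^ 2)]

lemma pv_integrableOn (x ε : ℝ) (hε : 0 < ε) :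
    IntegrableOn (fun y : ℝ => 1 / (1 + y ^ 4) * (1 / (x - y)))
      {y : ℝ | ε < |y - x|} := by
  have hmeasset : MeasurableSet {y : ℝ | ε < |y - x|} :=
    (isOpen_lt continuous_const ((continuous_id.sub continuous_const).abs)).measurableSet
  have hmeas : Measurable (fun y : ℝ => 1 / (1 + y ^ 4) * (1 / (x - y))) := by
    apply Measurable.mul
    · exact (measurable_const.div ((measurable_const.add (measurable_id.pow_const 4))))
    · exact measurable_const.div (measurable_const.sub measurable_id)
  apply Integrable.mono' ((pv_integrable_quartic.const_mul (1 / ε)).integrableOn)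
    hmeas.aestronglyMeasurable.restrict
  rw [ae_restrict_iff' hmeasset]
  filter_upwards with y hy
  have hy' : ε < |y - x| := hy
  have h4 : (0:ℝ) < 1 + y ^ 4 := by positivity
  rw [norm_mul, Real.norm_eq_abs, Real.norm_eq_abs,
    abs_of_pos (by positivity : (0:ℝ) < 1 / (1 + y ^ 4)),
    show |1 / (x - y)| = 1 / |y - x| from by rw [abs_div, abs_one, abs_sub_comm],
    mul_comm (1 / ε) _]
  exact mul_le_mul_of_nonneg_left (one_div_le_one_div_of_le hε hy'.le) (by positivity)

/-- For every `x ∈ ℝ`, the principal value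
`PV∫_ℝ (1/(1 + y⁴))·(1/(x−y)) dy` exists and equals
`π·x·(1 + x²)/(√2·(1 + x⁴))`. -/
theorem pv_quartic (x : ℝ) :
    Tendsto
      (fun ε : ℝ => ∫ y in {y : ℝ | ε < |y - x|}, (1 / (1 + y ^ 4)) * (1 / (x - y)))
      (𝓝[>] 0)
      (𝓝 (Real.pi * x * (1 + x ^ 2) / (Real.sqrt 2 * (1 + x ^ 4)))) := by
  set Lp : ℝ := (x ^ 3 + x) / 2 * (Real.pi / 2 + Real.pi / 2) +
      Real.sqrt 2 * (x ^ 2 / 2) * (Real.pi / 2) with hLp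
  set Lm : ℝ := (x ^ 3 + x) / 2 * (-(Real.pi / 2) + -(Real.pi / 2)) +
      Real.sqrt 2 * (x ^ 2 / 2) * (Real.pi / 2) with hLm
  have hs2 : (0:ℝ) < Real.sqrt 2 := Real.sqrt_pos.mpr (by norm_num)
  have hc0 : (0:ℝ) < Real.sqrt 2 * (1 + x ^ 4) := by positivity
  have hval : ∀ ε : ℝ, 0 < ε →
      ∫ y in {y : ℝ | ε < |y - x|}, (1 / (1 + y ^ 4)) * (1 / (x - y)) =
        (Lp - Lm + (pvC x (x - ε) - pvC x (x + ε))) / (Real.sqrt 2 * (1 + x ^ 4)) := by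
    intro ε hε
    have hset : {y : ℝ | ε < |y - x|} = Iio (x - ε) ∪ Ioi (x + ε) := by
      ext y
      simp only [mem_setOf_eq, mem_union, mem_Iio, mem_Ioi, lt_abs]
      constructor
      · rintro (h | h)
        · right; linarith
        · left; linarith
      · rintro (h | h)
        · right; linarith
        · left; linarith
    have hIntOn := pv_integrableOn x ε hε
    have hsub1 : Iio (x - ε) ⊆ {y : ℝ | ε < |y - x|} := by
      intro y hy
      simp only [mem_Iio] at hy
      simp only [mem_setOf_eq, lt_abs]
      right; linarith
    have hsub2 : Ioi (x + ε) ⊆ {y : ℝ | ε < |y - x|} := by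
      intro y hy
      simp only [mem_Ioi] at hy
      simp only [mem_setOf_eq, lt_abs]
      left; linarith
    have hInt1 := hIntOn.mono_set hsub1
    have hInt2 := hIntOn.mono_set hsub2
    have hdisj : Disjoint (Iio (x - ε)) (Ioi (x + ε)) := by
      apply Set.disjoint_left.mpr
      intro y h1 h2
      simp only [mem_Iio] at h1
      simp only [mem_Ioi] at h2
      linarith
    rw [hset, setIntegral_union hdisj measurableSet_Ioi hInt1 hInt2]
    have hIoi : ∫ y in Ioi (x + ε), (1 / (1 + y ^ 4)) * (1 / (x - y)) =
        (Lp - pvF x (x + ε)) / (Real.sqrt 2 * (1 + x ^ 4)) := by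
      have h := integral_Ioi_of_hasDerivAt_of_tendsto' (a := x + ε) (f := pvF x)
        (f' := fun y => Real.sqrt 2 * (1 + x ^ 4) * (1 / (1 + y ^ 4) * (1 / (x - y))))
        (fun y hy => hasDerivAt_pvF x (by simp only [mem_Ici] at hy; intro h; rw [h] at hy; linarith))
        (hInt2.const_mul _) (tendsto_pvF_atTop x)
      rw [MeasureTheory.integral_const_mul] at h
      rw [eq_div_iff hc0.ne', mul_comm]
      exact h
    have hIio : ∫ y in Iio (x - ε), (1 / (1 + y ^ 4)) * (1 / (x - y)) =
        (pvF x (x - ε) - Lm) / (Real.sqrt 2 * (1 + x ^ 4)) := by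
      rw [setIntegral_congr_set Iio_ae_eq_Iic]
      have hInt1' : IntegrableOn (fun y : ℝ => 1 / (1 + y ^ 4) * (1 / (x - y))) (Iic (x - ε)) := by
        exact hInt1.congr_set_ae Iio_ae_eq_Iic.symm
      have h := integral_Iic_of_hasDerivAt_of_tendsto' (a := x - ε) (f := pvF x)
        (f' := fun y => Real.sqrt 2 * (1 + x ^ 4) * (1 / (1 + y ^ 4) * (1 / (x - y))))
        (fun y hy => hasDerivAt_pvF x (by simp only [mem_Iic] at hy; intro h; rw [h] at hy; linarith))
        (hInt1'.const_mul _) (tendsto_pvF_atBot x)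
      rw [MeasureTheory.integral_const_mul] at h
      rw [eq_div_iff hc0.ne', mul_comm]
      exact h
    rw [hIio, hIoi, ← add_div]
    congr 1
    have e1 : pvF x (x - ε) = pvC x (x - ε) - Real.sqrt 2 * Real.log ε := by
      rw [pvF, show x - (x - ε) = ε from by ring]
    have e2 : pvF x (x + ε) = pvC x (x + ε) - Real.sqrt 2 * Real.log ε := by
      rw [pvF, show x - (x + ε) = -ε from by ring, Real.log_neg_eq_log]
    rw [e1, e2]
    ring
  have htendx : Tendsto (fun ε : ℝ => pvC x (x - ε)) (𝓝[>] 0) (𝓝 (pvC x x)) := by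
    have hc : ContinuousAt (pvC x) x := (hasDerivAt_pvC x x).continuousAt
    apply hc.tendsto.comp
    have : Tendsto (fun ε : ℝ => x - ε) (𝓝 0) (𝓝 (x - 0)) :=
      (continuous_const.sub continuous_id).tendsto 0
    rw [sub_zero] at this
    exact this.mono_left nhdsWithin_le_nhds
  have htendx' : Tendsto (fun ε : ℝ => pvC x (x + ε)) (𝓝[>] 0) (𝓝 (pvC x x)) := by
    have hc : ContinuousAt (pvC x) x := (hasDerivAt_pvC x x).continuousAt
    apply hc.tendsto.comp
    have : Tendsto (fun ε : ℝ => x + ε) (𝓝 0) (𝓝 (x + 0)) :=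
      (continuous_const.add continuous_id).tendsto 0
    rw [add_zero] at this
    exact this.mono_left nhdsWithin_le_nhds
  have hφ : Tendsto (fun ε : ℝ =>
      (Lp - Lm + (pvC x (x - ε) - pvC x (x + ε))) / (Real.sqrt 2 * (1 + x ^ 4)))
      (𝓝[>] 0) (𝓝 (Real.pi * x * (1 + x ^ 2) / (Real.sqrt 2 * (1 + x ^ 4)))) := by
    have h := ((tendsto_const_nhds : Tendsto (fun _ : ℝ => Lp - Lm) (𝓝[>] 0) (𝓝 (Lp - Lm))).add
      (htendx.sub htendx')).div_const (Real.sqrt 2 * (1 + x ^ 4))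
    have : (Lp - Lm + (pvC x x - pvC x x)) / (Real.sqrt 2 * (1 + x ^ 4)) =
        Real.pi * x * (1 + x ^ 2) / (Real.sqrt 2 * (1 + x ^ 4)) := by
      rw [sub_self, add_zero, hLp, hLm]
      congr 1
      ring
    rwa [this] at h
  apply hφ.congr'
  filter_upwards [self_mem_nhdsWithin] with ε hε
  exact (hval ε hε).symm
end

section
/- For every a > 0 and every x ∈ (−1,1), the principal value PV∫_{−1}^{1} (1/(a² + y²))·(1/(x−y)) dy exists and equals (2x/a)·arctan(1/a)/(a² + x²) + log((1+x)/(1−x))/(a² + x²). Equivalently, the regularized integral ∫_{−1}^{1} (1/(a² + y²) − 1/(a² + x²))/(x−y) dy equals (2x/a)·arctan(1/a)/(a² + x²). -/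
open MeasureTheory Filter Set Topology

/-- Antiderivative of `y ↦ 1/((a²+y²)(x−y))` away from `y = x` (using `log = log ∘ abs`). -/
noncomputable def pvH (a x y : ℝ) : ℝ :=
  (a^2+x^2)⁻¹ * (-Real.log (x - y) + (x/a) * Real.arctan (y/a)
    + (1/2) * Real.log (a^2+y^2))

theorem pvH_deriv (a x : ℝ) (ha : 0 < a) (y : ℝ) (hy : y ≠ x) :
    HasDerivAt (pvH a x) ((1 / (a ^ 2 + y ^ 2)) * (1 / (x - y))) y := by
  have ha2y : (0:ℝ) < a^2 + y^2 := by positivity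
  have hxy : x - y ≠ 0 := sub_ne_zero.mpr hy.symm
  have h1 : HasDerivAt (fun z : ℝ => x - z) (-1) y := (hasDerivAt_id y).const_sub x
  have hlog1 : HasDerivAt (fun z : ℝ => Real.log (x - z)) ((x - y)⁻¹ * (-1)) y :=
    (Real.hasDerivAt_log hxy).comp y h1
  have hdiv : HasDerivAt (fun z : ℝ => z / a) (1 / a) y := by
    simpa using (hasDerivAt_id y).div_const a
  have harc : HasDerivAt (fun z : ℝ => Real.arctan (z / a))
      ((1 / (1 + (y/a)^2)) * (1 / a)) y :=
    by have := (Real.hasDerivAt_arctan (y/a)).comp y hdiv; exact this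
  have hsq : HasDerivAt (fun z : ℝ => a^2 + z^2) (2*y) y := by
    simpa using ((hasDerivAt_pow 2 y).const_add (a^2))
  have hlog2 : HasDerivAt (fun z : ℝ => Real.log (a^2 + z^2)) ((a^2+y^2)⁻¹ * (2*y)) y :=
    by have := (Real.hasDerivAt_log ha2y.ne').comp y hsq; exact this
  have := (((hlog1.neg.add (harc.const_mul (x/a))).add
    (hlog2.const_mul (1/2))).const_mul ((a^2+x^2)⁻¹))
  refine this.congr_deriv ?_
  have h1a : (1:ℝ) + (y/a)^2 ≠ 0 := by positivity
  field_simp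
  ring

theorem pvF_deriv (a x : ℝ) (ha : 0 < a) (y : ℝ) :
    HasDerivAt (fun y : ℝ => (a^2+x^2)⁻¹ *
        ((x/a) * Real.arctan (y/a) + (1/2) * Real.log (a^2+y^2)))
      ((a^2+x^2)⁻¹ * ((x + y) / (a^2+y^2))) y := by
  have ha2y : (0:ℝ) < a^2 + y^2 := by positivity
  have hdiv : HasDerivAt (fun z : ℝ => z / a) (1 / a) y := by
    simpa using (hasDerivAt_id y).div_const a
  have harc : HasDerivAt (fun z : ℝ => Real.arctan (z / a))
      ((1 / (1 + (y/a)^2)) * (1 / a)) y :=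
    by have := (Real.hasDerivAt_arctan (y/a)).comp y hdiv; exact this
  have hsq : HasDerivAt (fun z : ℝ => a^2 + z^2) (2*y) y := by
    simpa using ((hasDerivAt_pow 2 y).const_add (a^2))
  have hlog2 : HasDerivAt (fun z : ℝ => Real.log (a^2 + z^2)) ((a^2+y^2)⁻¹ * (2*y)) y :=
    by have := (Real.hasDerivAt_log ha2y.ne').comp y hsq; exact this
  have := ((harc.const_mul (x/a)).add (hlog2.const_mul (1/2))).const_mul ((a^2+x^2)⁻¹)
  refine this.congr_deriv ?_
  have h1a : (1:ℝ) + (y/a)^2 ≠ 0 := by positivity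
  field_simp

/-- For `a > 0` and `x ∈ (−1,1)`, the principal value
`PV∫_{−1}^{1} (1/(a² + y²))·(1/(x−y)) dy` exists and equals
`(2x/a)·arctan(1/a)/(a² + x²) + log((1+x)/(1−x))/(a² + x²)`; equivalently, the
regularized integral `∫_{−1}^{1} (1/(a² + y²) − 1/(a² + x²))/(x−y) dy` equals
`(2x/a)·arctan(1/a)/(a² + x²)`. -/
theorem pv_lorentzian_finite_interval (a : ℝ) (ha : 0 < a) (x : ℝ)
    (hx : x ∈ Ioo (-1 : ℝ) 1) :
    Tendsto
      (fun ε : ℝ => ∫ y in {y : ℝ | y ∈ Ioo (-1 : ℝ) 1 ∧ ε < |y - x|},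
        (1 / (a ^ 2 + y ^ 2)) * (1 / (x - y)))
      (𝓝[>] 0)
      (𝓝 ((2 * x / a) * Real.arctan (1 / a) / (a ^ 2 + x ^ 2)
        + Real.log ((1 + x) / (1 - x)) / (a ^ 2 + x ^ 2)))
    ∧ (∫ y in Ioo (-1 : ℝ) 1, (1 / (a ^ 2 + y ^ 2) - 1 / (a ^ 2 + x ^ 2)) / (x - y))
        = (2 * x / a) * Real.arctan (1 / a) / (a ^ 2 + x ^ 2) := by
  obtain ⟨hx1, hx2⟩ := hx
  have ha2x : (0:ℝ) < a^2 + x^2 := by positivity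
  constructor
  · -- the principal value statement
    set f : ℝ → ℝ := fun y => (1 / (a ^ 2 + y ^ 2)) * (1 / (x - y)) with hf
    set Ψ : ℝ → ℝ := fun ε =>
      (a^2+x^2)⁻¹ * ((x/a) * (Real.arctan ((x-ε)/a) - Real.arctan ((x+ε)/a))
        + (1/2) * (Real.log (a^2+(x-ε)^2) - Real.log (a^2+(x+ε)^2)))
      + (pvH a x 1 - pvH a x (-1)) with hΨ
    have hcont : ∀ s : Set ℝ, (∀ y ∈ s, y ≠ x) → ContinuousOn f s := by
      intro s hs y hy
      refine ContinuousAt.continuousWithinAt ?_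
      refine ContinuousAt.mul ?_ ?_
      · exact ContinuousAt.div continuousAt_const (by fun_prop) (by positivity)
      · exact ContinuousAt.div continuousAt_const (by fun_prop)
          (sub_ne_zero.mpr (hs y hy).symm)
    have hδ : (0:ℝ) < min (1+x) (1-x) := by
      apply lt_min <;> linarith
    -- eventual equality with the explicit expression Ψ
    have hev : ∀ᶠ ε in 𝓝[>] (0:ℝ),
        (∫ y in {y : ℝ | y ∈ Ioo (-1 : ℝ) 1 ∧ ε < |y - x|}, f y) = Ψ ε := by
      filter_upwards [Ioo_mem_nhdsGT_of_mem
        (⟨le_refl 0, hδ⟩ : (0:ℝ) ∈ Ico 0 (min (1+x) (1-x)))] with ε hε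
      obtain ⟨hε0, hεδ⟩ := hε
      have hε1 : ε < 1 + x := lt_of_lt_of_le hεδ (min_le_left _ _)
      have hε2 : ε < 1 - x := lt_of_lt_of_le hεδ (min_le_right _ _)
      have hset : {y : ℝ | y ∈ Ioo (-1:ℝ) 1 ∧ ε < |y - x|}
          = Ioo (-1) (x-ε) ∪ Ioo (x+ε) 1 := by
        ext y
        simp only [mem_setOf_eq, mem_Ioo, mem_union, lt_abs]
        constructor
        · rintro ⟨⟨h1, h2⟩, h3 | h3⟩
          · right; constructor <;> linarith
          · left; constructor <;> linarith
        · rintro (⟨h1, h2⟩ | ⟨h1, h2⟩)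
          · exact ⟨⟨h1, by linarith⟩, Or.inr (by linarith)⟩
          · exact ⟨⟨by linarith, h2⟩, Or.inl (by linarith)⟩
      have hIL : IntegrableOn f (Ioo (-1:ℝ) (x-ε)) := by
        refine ((hcont (Icc (-1) (x-ε)) ?_).integrableOn_Icc).mono_set Ioo_subset_Icc_self
        rintro y ⟨_, hy2⟩; intro h; subst h; linarith
      have hIR : IntegrableOn f (Ioo (x+ε) 1) := by
        refine ((hcont (Icc (x+ε) 1) ?_).integrableOn_Icc).mono_set Ioo_subset_Icc_self
        rintro y ⟨hy1, _⟩; intro h; subst h; linarith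
      have hdisj : Disjoint (Ioo (-1:ℝ) (x-ε)) (Ioo (x+ε) 1) := by
        refine disjoint_left.mpr ?_
        rintro y ⟨_, h2⟩ ⟨h3, _⟩; linarith
      rw [hset, setIntegral_union hdisj measurableSet_Ioo hIL hIR]
      have hL : (∫ y in Ioo (-1:ℝ) (x-ε), f y) = pvH a x (x-ε) - pvH a x (-1) := by
        rw [← integral_Ioc_eq_integral_Ioo,
          ← intervalIntegral.integral_of_le (by linarith : (-1:ℝ) ≤ x - ε)]
        refine intervalIntegral.integral_eq_sub_of_hasDerivAt ?_ ?_
        · intro y hy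
          rw [uIcc_of_le (by linarith : (-1:ℝ) ≤ x - ε)] at hy
          exact pvH_deriv a x ha y
            (by intro h; subst h; exact absurd hy.2 (by push_neg; linarith))
        · refine (hcont _ ?_).intervalIntegrable
          rw [uIcc_of_le (by linarith : (-1:ℝ) ≤ x - ε)]
          rintro y ⟨_, hy2⟩; intro h; subst h; linarith
      have hR : (∫ y in Ioo (x+ε) 1, f y) = pvH a x 1 - pvH a x (x+ε) := by
        rw [← integral_Ioc_eq_integral_Ioo,
          ← intervalIntegral.integral_of_le (by linarith : x + ε ≤ 1)]
        refine intervalIntegral.integral_eq_sub_of_hasDerivAt ?_ ?_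
        · intro y hy
          rw [uIcc_of_le (by linarith : x + ε ≤ 1)] at hy
          exact pvH_deriv a x ha y
            (by intro h; subst h; exact absurd hy.1 (by push_neg; linarith))
        · refine (hcont _ ?_).intervalIntegrable
          rw [uIcc_of_le (by linarith : x + ε ≤ 1)]
          rintro y ⟨hy1, _⟩; intro h; subst h; linarith
      rw [hL, hR, hΨ]
      simp only [pvH]
      rw [show x - (x - ε) = ε by ring, show x - (x + ε) = -ε by ring,
        Real.log_neg_eq_log]
      ring
    -- limit of Ψ
    have hΨlim : Tendsto Ψ (𝓝[>] 0)
        (𝓝 ((2 * x / a) * Real.arctan (1 / a) / (a ^ 2 + x ^ 2)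
          + Real.log ((1 + x) / (1 - x)) / (a ^ 2 + x ^ 2))) := by
      have hcΨ : ContinuousAt Ψ 0 := by
        refine ContinuousAt.add (ContinuousAt.mul continuousAt_const
          (ContinuousAt.add (ContinuousAt.mul continuousAt_const ?_)
          (ContinuousAt.mul continuousAt_const ?_))) continuousAt_const
        · exact ContinuousAt.sub
            ((Real.continuous_arctan.comp
              (by fun_prop : Continuous fun ε:ℝ => (x-ε)/a)).continuousAt)
            ((Real.continuous_arctan.comp
              (by fun_prop : Continuous fun ε:ℝ => (x+ε)/a)).continuousAt)
        · refine ContinuousAt.sub (ContinuousAt.log (by fun_prop) ?_)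
            (ContinuousAt.log (by fun_prop) ?_) <;> positivity
      have hΨ0 : Ψ 0 = (2 * x / a) * Real.arctan (1 / a) / (a ^ 2 + x ^ 2)
          + Real.log ((1 + x) / (1 - x)) / (a ^ 2 + x ^ 2) := by
        have hlogdiv : Real.log ((1 + x) / (1 - x)) = Real.log (1+x) - Real.log (1-x) :=
          Real.log_div (by linarith) (by linarith)
        have h1 : Real.arctan ((-1:ℝ)/a) = - Real.arctan (1/a) := by
          rw [neg_div, Real.arctan_neg]
        have h2 : Real.log (x - 1) = Real.log (1 - x) := by
          rw [show x - 1 = -(1-x) by ring, Real.log_neg_eq_log]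
        have h3 : Real.log (x - (-1)) = Real.log (1 + x) := by norm_num; ring_nf
        simp only [hΨ, pvH, sub_zero, add_zero, sub_self, mul_zero, zero_add, h1, h2, h3,
          hlogdiv]
        rw [show a^2 + (-1:ℝ)^2 = a^2 + 1^2 by norm_num]
        field_simp
        ring
      rw [← hΨ0]
      exact hcΨ.tendsto.mono_left nhdsWithin_le_nhds
    exact hΨlim.congr' (Filter.EventuallyEq.symm hev)
  · -- the regularized integral
    have hae : ∀ᵐ y : ℝ, y ≠ x := by
      simp [ae_iff, Real.volume_singleton, show {y : ℝ | ¬ y ≠ x} = {x} by ext; simp]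
    have hcongr : (∫ y in Ioo (-1 : ℝ) 1,
          (1 / (a ^ 2 + y ^ 2) - 1 / (a ^ 2 + x ^ 2)) / (x - y))
        = ∫ y in Ioo (-1 : ℝ) 1, (a^2+x^2)⁻¹ * ((x + y) / (a^2+y^2)) := by
      refine setIntegral_congr_ae measurableSet_Ioo ?_
      filter_upwards [hae] with y hy _
      have ha2y : (0:ℝ) < a^2 + y^2 := by positivity
      have hxy : x - y ≠ 0 := sub_ne_zero.mpr hy.symm
      field_simp
      ring
    rw [hcongr, ← integral_Ioc_eq_integral_Ioo,
      ← intervalIntegral.integral_of_le (by norm_num : (-1:ℝ) ≤ 1)]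
    have hcontg : Continuous (fun y : ℝ => (a^2+x^2)⁻¹ * ((x + y) / (a^2+y^2))) := by
      refine continuous_const.mul (Continuous.div ?_ ?_ fun y => by positivity) <;> fun_prop
    rw [intervalIntegral.integral_eq_sub_of_hasDerivAt
      (fun y _ => pvF_deriv a x ha y) (hcontg.intervalIntegrable _ _)]
    have harc : Real.arctan (-1 / a) = - Real.arctan (1 / a) := by
      rw [neg_div, Real.arctan_neg]
    rw [harc]
    have hlog : Real.log (a^2 + (-1:ℝ)^2) = Real.log (a^2 + 1^2) := by norm_num
    rw [hlog]
    field_simp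
    ring
end

section
/- Let a₁, a₂ > 0 and set α = (a₂² + 1)/(a₁² + 1), so that the function f : ℝ → ℝ defined by f(y) = 1/(a₁² + y²) for |y| ≤ 1 and f(y) = α/(a₂² + y²) for |y| > 1 is continuous on ℝ. Then the principal value h(x) := PV∫_ℝ f(y)/(x−y) dy (which exists for every x ∈ (−1,1)) has a finite one-sided limit as x → 1⁻, namely lim_{x→1⁻} h(x) = 2·arctan(1/a₁)/(a₁·(a₁² + 1)) + 2α·arctan(a₂)/(a₂·(a₂² + 1)). -/
open MeasureTheory Filter Set Topology

open Real

noncomputable def PVg (a x y : ℝ) : ℝ := ((a ^ 2 + y ^ 2) * (x - y))⁻¹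

noncomputable def PVG (a x y : ℝ) : ℝ :=
  (a ^ 2 + x ^ 2)⁻¹ *
    ((1 / 2) * Real.log (a ^ 2 + y ^ 2) + (x / a) * Real.arctan (y / a) - Real.log (x - y))

lemma sq_add_pos (a y : ℝ) (ha : 0 < a) : 0 < a ^ 2 + y ^ 2 := by positivity

lemma hasDerivAt_PVG {a x : ℝ} (ha : 0 < a) {y : ℝ} (hxy : y ≠ x) :
    HasDerivAt (PVG a x) (PVg a x y) y := by
  have h1 : (0:ℝ) < a ^ 2 + y ^ 2 := by positivity
  have hx1 : (0:ℝ) < a ^ 2 + x ^ 2 := by positivity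
  have hxy' : x - y ≠ 0 := sub_ne_zero.mpr hxy.symm
  have hlog : HasDerivAt (fun y : ℝ => Real.log (a ^ 2 + y ^ 2)) (2 * y / (a ^ 2 + y ^ 2)) y := by
    have h : HasDerivAt (fun y : ℝ => a ^ 2 + y ^ 2) (2 * y) y := by
      simpa using ((hasDerivAt_pow 2 y).const_add (a ^ 2))
    simpa [div_eq_mul_inv, mul_comm, Function.comp_def] using (Real.hasDerivAt_log h1.ne').comp y h
  have harc : HasDerivAt (fun y : ℝ => Real.arctan (y / a)) ((1 + (y / a) ^ 2)⁻¹ * a⁻¹) y := by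
    have h : HasDerivAt (fun y : ℝ => y / a) a⁻¹ y := by
      simpa using (hasDerivAt_id y).div_const a
    simpa [div_eq_mul_inv, Function.comp_def] using (Real.hasDerivAt_arctan (y / a)).comp y h
  have hlog2 : HasDerivAt (fun y : ℝ => Real.log (x - y)) (-(x - y)⁻¹) y := by
    have h : HasDerivAt (fun y : ℝ => x - y) (-1) y := by
      simpa using ((hasDerivAt_id y).const_sub x)
    simpa [div_eq_mul_inv, Function.comp_def] using (Real.hasDerivAt_log hxy').comp y h
  have := (((hlog.const_mul (1/2 : ℝ)).add (harc.const_mul (x / a))).sub hlog2).const_mul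
    ((a ^ 2 + x ^ 2)⁻¹)
  refine this.congr_deriv ?_
  unfold PVg
  have ha' : a ≠ 0 := ha.ne'
  have h2 : (1 : ℝ) + (y / a) ^ 2 = (a ^ 2 + y ^ 2) / a ^ 2 := by
    field_simp
  rw [h2]
  field_simp
  ring

lemma continuousOn_PVg {a x : ℝ} (ha : 0 < a) {s : Set ℝ} (hs : ∀ y ∈ s, y ≠ x) :
    ContinuousOn (PVg a x) s := by
  apply ContinuousOn.inv₀
  · fun_prop
  · intro y hy
    have h1 : (0:ℝ) < a ^ 2 + y ^ 2 := by positivity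
    exact mul_ne_zero h1.ne' (sub_ne_zero.mpr (hs y hy).symm)

lemma PVQ_eq {a x y : ℝ} (ha : 0 < a) (hy : y ≠ 0) (hxy : x - y ≠ 0) :
    (1 / 2) * Real.log (a ^ 2 + y ^ 2) - Real.log (x - y)
      = (1 / 2) * Real.log ((a ^ 2 * (y⁻¹) ^ 2 + 1) / ((x * y⁻¹ - 1) ^ 2)) := by
  have h1 : (0:ℝ) < a ^ 2 + y ^ 2 := by positivity
  have h2 : x * y⁻¹ - 1 ≠ 0 := by
    have h3 : x * y⁻¹ - 1 = (x - y) * y⁻¹ := by field_simp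
    rw [h3]; exact mul_ne_zero hxy (inv_ne_zero hy)
  have e : (a ^ 2 * (y⁻¹) ^ 2 + 1) / ((x * y⁻¹ - 1) ^ 2) = (a ^ 2 + y ^ 2) / ((x - y) ^ 2) := by
    rw [div_eq_div_iff (pow_ne_zero 2 h2) (pow_ne_zero 2 hxy)]
    field_simp
  rw [e, Real.log_div h1.ne' (pow_ne_zero 2 hxy), Real.log_pow]
  push_cast
  ring

lemma tendsto_PVQ_zero {a x : ℝ} (ha : 0 < a) :
    Tendsto (fun t : ℝ => (1 / 2) * Real.log ((a ^ 2 * t ^ 2 + 1) / ((x * t - 1) ^ 2)))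
      (𝓝 0) (𝓝 0) := by
  have h : ContinuousAt (fun t : ℝ => (1 / 2) * Real.log ((a ^ 2 * t ^ 2 + 1) / ((x * t - 1) ^ 2)))
      0 := by
    apply ContinuousAt.mul continuousAt_const
    apply ContinuousAt.comp (Real.continuousAt_log (by norm_num))
    apply ContinuousAt.div (by fun_prop) (by fun_prop)
    norm_num
  have h0 : (fun t : ℝ => (1 / 2) * Real.log ((a ^ 2 * t ^ 2 + 1) / ((x * t - 1) ^ 2))) 0 = 0 := by
    norm_num
  simpa [h0] using h.tendsto

lemma tendsto_PVG_atTop {a x : ℝ} (ha : 0 < a) :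
    Tendsto (PVG a x) atTop (𝓝 ((a ^ 2 + x ^ 2)⁻¹ * (x / a * (π / 2)))) := by
  have harc : Tendsto (fun y : ℝ => Real.arctan (y / a)) atTop (𝓝 (π / 2)) := by
    exact (Real.tendsto_arctan_atTop.mono_right nhdsWithin_le_nhds).comp
      (Tendsto.atTop_div_const ha tendsto_id)
  have hQ : Tendsto (fun y : ℝ => (1 / 2) * Real.log (a ^ 2 + y ^ 2) - Real.log (x - y))
      atTop (𝓝 0) := by
    apply Tendsto.congr' _ ((tendsto_PVQ_zero ha (x := x)).comp tendsto_inv_atTop_zero)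
    filter_upwards [eventually_gt_atTop (max x 0)] with y hy
    have hy0 : y ≠ 0 := by have := lt_of_le_of_lt (le_max_right x 0) hy; linarith
    have hxy : x - y ≠ 0 := by have := lt_of_le_of_lt (le_max_left x 0) hy; intro h; linarith
    exact (PVQ_eq ha hy0 hxy).symm
  have := ((hQ.add (harc.const_mul (x / a))).const_mul ((a ^ 2 + x ^ 2)⁻¹))
  simp only [zero_add] at this
  apply this.congr
  intro y
  unfold PVG
  ring

lemma tendsto_PVG_atBot {a x : ℝ} (ha : 0 < a) :
    Tendsto (PVG a x) atBot (𝓝 ((a ^ 2 + x ^ 2)⁻¹ * (x / a * (-(π / 2))))) := by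
  have harc : Tendsto (fun y : ℝ => Real.arctan (y / a)) atBot (𝓝 (-(π / 2))) := by
    exact (Real.tendsto_arctan_atBot.mono_right nhdsWithin_le_nhds).comp
      (Tendsto.atBot_div_const ha tendsto_id)
  have hinv : Tendsto (fun y : ℝ => y⁻¹) atBot (𝓝 (0:ℝ)) := by
    have h1 : Tendsto (fun y : ℝ => -y) atBot atTop := tendsto_neg_atBot_atTop
    have h2 : Tendsto (fun r : ℝ => r⁻¹) atTop (𝓝 (0:ℝ)) := tendsto_inv_atTop_zero
    have h := (h2.comp h1).neg
    simpa [Function.comp_def, inv_neg] using h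
  have hQ : Tendsto (fun y : ℝ => (1 / 2) * Real.log (a ^ 2 + y ^ 2) - Real.log (x - y))
      atBot (𝓝 0) := by
    apply Tendsto.congr' _ ((tendsto_PVQ_zero ha (x := x)).comp hinv)
    filter_upwards [eventually_lt_atBot (min x 0)] with y hy
    have hy0 : y ≠ 0 := by have := lt_of_lt_of_le hy (min_le_right x 0); linarith
    have hxy : x - y ≠ 0 := by have := lt_of_lt_of_le hy (min_le_left x 0); intro h; linarith
    exact (PVQ_eq ha hy0 hxy).symm
  have := ((hQ.add (harc.const_mul (x / a))).const_mul ((a ^ 2 + x ^ 2)⁻¹))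
  simp only [zero_add] at this
  apply this.congr
  intro y
  unfold PVG
  ring

lemma integrable_inv_sq_add {a : ℝ} (ha : 0 < a) :
    Integrable (fun y : ℝ => (a ^ 2 + y ^ 2)⁻¹) := by
  have h := (integrable_inv_one_add_sq.comp_div (R := a) ha.ne').const_mul (a ^ 2)⁻¹
  apply h.congr (Filter.Eventually.of_forall fun y => ?_)
  have e : a ^ 2 + y ^ 2 = a ^ 2 * (1 + (y / a) ^ 2) := by field_simp
  rw [e, mul_inv]

lemma intervalIntegral_PVg {a x b c : ℝ} (ha : 0 < a) (hx : ∀ y ∈ uIcc b c, y ≠ x) :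
    ∫ y in b..c, PVg a x y = PVG a x c - PVG a x b := by
  apply intervalIntegral.integral_eq_sub_of_hasDerivAt
  · exact fun y hy => hasDerivAt_PVG ha (hx y hy)
  · exact (continuousOn_PVg ha hx).intervalIntegrable

lemma integrableOn_PVg_Ioi {a x : ℝ} (ha : 0 < a) (hx : x < 1) :
    IntegrableOn (PVg a x) (Ioi 1) := by
  have hmaj : Integrable (fun y : ℝ => (1 - x)⁻¹ * (a ^ 2 + y ^ 2)⁻¹) :=
    (integrable_inv_sq_add ha).const_mul _
  apply (hmaj.integrableOn).mono' ((continuousOn_PVg ha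
    (fun y hy => by rintro rfl; exact absurd hx (not_lt.mpr (le_of_lt hy)))).aestronglyMeasurable
    measurableSet_Ioi)
  rw [ae_restrict_iff' measurableSet_Ioi]
  apply Eventually.of_forall
  intro y hy
  have h1 : (0:ℝ) < a ^ 2 + y ^ 2 := by positivity
  have h2 : (0:ℝ) < y - x := by simp only [mem_Ioi] at hy; linarith
  have h3 : (0:ℝ) < 1 - x := by linarith
  have h4 : 1 - x ≤ y - x := by simp only [mem_Ioi] at hy; linarith
  rw [Real.norm_eq_abs, PVg, abs_inv, abs_mul, abs_of_pos h1, abs_sub_comm, abs_of_pos h2,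
    mul_inv, mul_comm]
  gcongr

lemma integrableOn_PVg_Iic {a x : ℝ} (ha : 0 < a) (hx : -1 < x) :
    IntegrableOn (PVg a x) (Iic (-1)) := by
  have hmaj : Integrable (fun y : ℝ => (x + 1)⁻¹ * (a ^ 2 + y ^ 2)⁻¹) :=
    (integrable_inv_sq_add ha).const_mul _
  apply (hmaj.integrableOn).mono' ((continuousOn_PVg ha
    (fun y hy => by rintro rfl; exact absurd hx (not_lt.mpr (by exact_mod_cast hy)))).aestronglyMeasurable
    measurableSet_Iic)
  rw [ae_restrict_iff' measurableSet_Iic]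
  apply Eventually.of_forall
  intro y hy
  have h1 : (0:ℝ) < a ^ 2 + y ^ 2 := by positivity
  have h2 : (0:ℝ) < x - y := by simp only [mem_Iic] at hy; linarith
  have h3 : (0:ℝ) < x + 1 := by linarith
  have h4 : x + 1 ≤ x - y := by simp only [mem_Iic] at hy; linarith
  rw [Real.norm_eq_abs, PVg, abs_inv, abs_mul, abs_of_pos h1, abs_of_pos h2, mul_inv, mul_comm]
  gcongr

lemma integral_PVg_Ioi {a x : ℝ} (ha : 0 < a) (hx : x < 1) :
    ∫ y in Ioi 1, PVg a x y
      = (a ^ 2 + x ^ 2)⁻¹ * (x / a * (π / 2)) - PVG a x 1 := by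
  apply integral_Ioi_of_hasDerivAt_of_tendsto
  · exact (hasDerivAt_PVG ha (by intro h; linarith)).continuousAt.continuousWithinAt
  · exact fun y hy => hasDerivAt_PVG ha (by simp only [mem_Ioi] at hy; intro h; linarith)
  · exact integrableOn_PVg_Ioi ha hx
  · exact tendsto_PVG_atTop ha

lemma integral_PVg_Iic {a x : ℝ} (ha : 0 < a) (hx : -1 < x) :
    ∫ y in Iic (-1), PVg a x y
      = PVG a x (-1) - (a ^ 2 + x ^ 2)⁻¹ * (x / a * (-(π / 2))) := by
  apply integral_Iic_of_hasDerivAt_of_tendsto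
  · exact (hasDerivAt_PVG ha (by intro h; linarith)).continuousAt.continuousWithinAt
  · exact fun y hy => hasDerivAt_PVG ha (by simp only [mem_Iio] at hy; intro h; linarith)
  · exact integrableOn_PVg_Iic ha hx
  · exact tendsto_PVG_atBot ha

lemma pv_key (a₁ a₂ α x ε : ℝ) (h₁ : 0 < a₁) (h₂ : 0 < a₂)
    (heq : 1 / (a₁ ^ 2 + 1) = α / (a₂ ^ 2 + 1))
    (hx1 : -1 < x) (hx2 : x < 1) (hε : 0 < ε) (hε1 : ε < 1 - x) (hε2 : ε < x + 1) :
    ∫ y in {y : ℝ | ε < |y - x|},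
        (if |y| ≤ 1 then 1 / (a₁ ^ 2 + y ^ 2) else α / (a₂ ^ 2 + y ^ 2)) / (x - y)
      = α * (∫ y in Iic (-1 : ℝ), PVg a₂ x y)
        + (PVG a₁ x (x - ε) - PVG a₁ x (-1)) + (PVG a₁ x 1 - PVG a₁ x (x + ε))
        + α * (∫ y in Ioi (1 : ℝ), PVg a₂ x y) := by
  set F : ℝ → ℝ :=
    fun y => (if |y| ≤ 1 then 1 / (a₁ ^ 2 + y ^ 2) else α / (a₂ ^ 2 + y ^ 2)) / (x - y) with hF
  have hb1 : -1 < x - ε := by linarith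
  have hb2 : x - ε < x + ε := by linarith
  have hb3 : x + ε ≤ 1 := by linarith
  -- pointwise identifications
  have e1 : EqOn F (fun y => α * PVg a₂ x y) (Iic (-1)) := by
    intro y hy
    simp only [mem_Iic] at hy
    rcases eq_or_lt_of_le hy with rfl | hy'
    · have : |(-1 : ℝ)| ≤ 1 := by norm_num
      simp only [hF, if_pos this, PVg]
      rw [div_div, one_div, mul_inv, mul_inv, ← mul_assoc]
      congr 1
      have h5 : a₁ ^ 2 + (-1:ℝ) ^ 2 = a₁ ^ 2 + 1 := by norm_num
      have h6 : a₂ ^ 2 + (-1:ℝ) ^ 2 = a₂ ^ 2 + 1 := by norm_num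
      rw [h5, h6]
      rw [one_div, div_eq_mul_inv] at heq
      exact heq
    · have : ¬ |y| ≤ 1 := by rw [abs_le]; intro h; linarith [h.1]
      simp only [hF, if_neg this, PVg]
      rw [div_div, div_eq_mul_inv]
  have e2 : EqOn F (PVg a₁ x) (Ioo (-1) (x - ε)) := by
    intro y hy
    have : |y| ≤ 1 := abs_le.mpr ⟨by linarith [hy.1], by linarith [hy.2]⟩
    simp only [hF, if_pos this, PVg]
    rw [div_div, one_div]
  have e3 : EqOn F (PVg a₁ x) (Ioc (x + ε) 1) := by
    intro y hy
    have : |y| ≤ 1 := abs_le.mpr ⟨by linarith [hy.1], hy.2⟩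
    simp only [hF, if_pos this, PVg]
    rw [div_div, one_div]
  have e4 : EqOn F (fun y => α * PVg a₂ x y) (Ioi 1) := by
    intro y hy
    have : ¬ |y| ≤ 1 := not_le.mpr (lt_of_lt_of_le hy (le_abs_self y))
    simp only [hF, if_neg this, PVg]
    rw [div_div, div_eq_mul_inv]
  -- integrability of the pieces
  have i1 : IntegrableOn F (Iic (-1)) :=
    (IntegrableOn.congr_fun ((integrableOn_PVg_Iic h₂ hx1).const_mul α) e1.symm measurableSet_Iic)
  have i2 : IntegrableOn F (Ioo (-1) (x - ε)) := by
    refine IntegrableOn.congr_fun ?_ e2.symm measurableSet_Ioo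
    exact ((continuousOn_PVg h₁ (fun y hy => by rintro rfl; simp only [mem_Icc] at hy; linarith [hy.2])).integrableOn_Icc).mono_set Ioo_subset_Icc_self
  have i3 : IntegrableOn F (Ioc (x + ε) 1) := by
    refine IntegrableOn.congr_fun ?_ e3.symm measurableSet_Ioc
    exact ((continuousOn_PVg h₁ (fun y hy => by rintro rfl; simp only [mem_Icc] at hy; linarith [hy.1])).integrableOn_Icc).mono_set Ioc_subset_Icc_self
  have i4 : IntegrableOn F (Ioi 1) :=
    (IntegrableOn.congr_fun ((integrableOn_PVg_Ioi h₂ hx2).const_mul α) e4.symm measurableSet_Ioi)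
  -- set decompositions
  have hsplit : {y : ℝ | ε < |y - x|} = Iio (x - ε) ∪ Ioi (x + ε) := by
    ext y
    simp only [mem_setOf_eq, mem_union, mem_Iio, mem_Ioi, lt_abs]
    constructor
    · rintro (h | h)
      · right; linarith
      · left; linarith
    · rintro (h | h)
      · right; linarith
      · left; linarith
  have hIio : Iio (x - ε) = Iic (-1) ∪ Ioo (-1) (x - ε) := (Iic_union_Ioo_eq_Iio hb1).symm
  have hIoi : Ioi (x + ε) = Ioc (x + ε) 1 ∪ Ioi 1 := (Ioc_union_Ioi_eq_Ioi hb3).symm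
  have iIio : IntegrableOn F (Iio (x - ε)) := by rw [hIio]; exact i1.union i2
  have iIoi : IntegrableOn F (Ioi (x + ε)) := by rw [hIoi]; exact i3.union i4
  have d0 : Disjoint (Iio (x - ε)) (Ioi (x + ε)) := by
    rw [Set.disjoint_left]; intro y hy hy'
    simp only [mem_Iio] at hy; simp only [mem_Ioi] at hy'; linarith
  have d1 : Disjoint (Iic (-1 : ℝ)) (Ioo (-1) (x - ε)) := by
    rw [Set.disjoint_left]; intro y hy hy'
    simp only [mem_Iic] at hy; exact absurd hy'.1 (by linarith)
  have d2 : Disjoint (Ioc (x + ε) 1) (Ioi (1 : ℝ)) := by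
    rw [Set.disjoint_left]; intro y hy hy'
    simp only [mem_Ioi] at hy'; exact absurd hy.2 (by linarith)
  rw [hsplit, setIntegral_union d0 measurableSet_Ioi iIio iIoi, hIio, hIoi,
    setIntegral_union d1 measurableSet_Ioo i1 i2,
    setIntegral_union d2 measurableSet_Ioi i3 i4,
    setIntegral_congr_fun measurableSet_Iic e1,
    setIntegral_congr_fun measurableSet_Ioo e2,
    setIntegral_congr_fun measurableSet_Ioc e3,
    setIntegral_congr_fun measurableSet_Ioi e4,
    MeasureTheory.integral_const_mul, MeasureTheory.integral_const_mul]
  have m2 : ∫ y in Ioo (-1 : ℝ) (x - ε), PVg a₁ x y = PVG a₁ x (x - ε) - PVG a₁ x (-1) := by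
    rw [← integral_Ioc_eq_integral_Ioo, ← intervalIntegral.integral_of_le hb1.le]
    apply intervalIntegral_PVg h₁
    intro y hy
    rw [uIcc_of_le hb1.le] at hy
    simp only [mem_Icc] at hy
    intro h; subst h; linarith [hy.2]
  have m3 : ∫ y in Ioc (x + ε) 1, PVg a₁ x y = PVG a₁ x 1 - PVG a₁ x (x + ε) := by
    rw [← intervalIntegral.integral_of_le hb3]
    apply intervalIntegral_PVg h₁
    intro y hy
    rw [uIcc_of_le hb3] at hy
    simp only [mem_Icc] at hy
    intro h; subst h; linarith [hy.1]
  rw [m2, m3]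
  ring

noncomputable def PVH (a₁ a₂ α x : ℝ) : ℝ :=
  α * ((PVG a₂ x (-1) - (a₂ ^ 2 + x ^ 2)⁻¹ * (x / a₂ * (-(π / 2))))
      + ((a₂ ^ 2 + x ^ 2)⁻¹ * (x / a₂ * (π / 2)) - PVG a₂ x 1))
    + (PVG a₁ x 1 - PVG a₁ x (-1))

lemma pv_part1 (a₁ a₂ α : ℝ) (h₁ : 0 < a₁) (h₂ : 0 < a₂)
    (heq : 1 / (a₁ ^ 2 + 1) = α / (a₂ ^ 2 + 1)) {x : ℝ} (hx : x ∈ Ioo (-1 : ℝ) 1) :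
    Tendsto
      (fun ε : ℝ => ∫ y in {y : ℝ | ε < |y - x|},
        (if |y| ≤ 1 then 1 / (a₁ ^ 2 + y ^ 2) else α / (a₂ ^ 2 + y ^ 2)) / (x - y))
      (𝓝[>] 0) (𝓝 (PVH a₁ a₂ α x)) := by
  obtain ⟨hx1, hx2⟩ := hx
  set δ := min (1 - x) (x + 1) with hδdef
  have hδ : 0 < δ := lt_min (by linarith) (by linarith)
  set K₁ := ∫ y in Iic (-1 : ℝ), PVg a₂ x y with hK₁
  set K₂ := ∫ y in Ioi (1 : ℝ), PVg a₂ x y with hK₂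
  set φ : ℝ → ℝ := fun ε => α * K₁ + (PVG a₁ x (x - ε) - PVG a₁ x (-1))
      + (PVG a₁ x 1 - PVG a₁ x (x + ε)) + α * K₂ with hφdef
  have hEeq : ∀ ε : ℝ, PVG a₁ x (x - ε) - PVG a₁ x (x + ε)
      = (a₁ ^ 2 + x ^ 2)⁻¹ *
          ((1 / 2) * (Real.log (a₁ ^ 2 + (x - ε) ^ 2) - Real.log (a₁ ^ 2 + (x + ε) ^ 2))
            + (x / a₁) * (Real.arctan ((x - ε) / a₁) - Real.arctan ((x + ε) / a₁))) := by
    intro ε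
    unfold PVG
    have e1 : x - (x - ε) = ε := by ring
    have e2 : x - (x + ε) = -ε := by ring
    rw [e1, e2, Real.log_neg_eq_log]
    ring
  have hE : Tendsto (fun ε : ℝ => (a₁ ^ 2 + x ^ 2)⁻¹ *
      ((1 / 2) * (Real.log (a₁ ^ 2 + (x - ε) ^ 2) - Real.log (a₁ ^ 2 + (x + ε) ^ 2))
        + (x / a₁) * (Real.arctan ((x - ε) / a₁) - Real.arctan ((x + ε) / a₁))))
      (𝓝 0) (𝓝 0) := by
    have hc : ContinuousAt (fun ε : ℝ => (a₁ ^ 2 + x ^ 2)⁻¹ *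
        ((1 / 2) * (Real.log (a₁ ^ 2 + (x - ε) ^ 2) - Real.log (a₁ ^ 2 + (x + ε) ^ 2))
          + (x / a₁) * (Real.arctan ((x - ε) / a₁) - Real.arctan ((x + ε) / a₁)))) 0 := by
      have hl1 : ContinuousAt (fun ε : ℝ => Real.log (a₁ ^ 2 + (x - ε) ^ 2)) 0 := by
        apply ContinuousAt.comp (Real.continuousAt_log (by positivity)) (by fun_prop)
      have hl2 : ContinuousAt (fun ε : ℝ => Real.log (a₁ ^ 2 + (x + ε) ^ 2)) 0 := by
        apply ContinuousAt.comp (Real.continuousAt_log (by positivity)) (by fun_prop)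
      have ha1 : ContinuousAt (fun ε : ℝ => Real.arctan ((x - ε) / a₁)) 0 :=
        Real.continuous_arctan.continuousAt.comp (by fun_prop)
      have ha2 : ContinuousAt (fun ε : ℝ => Real.arctan ((x + ε) / a₁)) 0 :=
        Real.continuous_arctan.continuousAt.comp (by fun_prop)
      exact continuousAt_const.mul (((continuousAt_const.mul (hl1.sub hl2))).add
        (continuousAt_const.mul (ha1.sub ha2)))
    have h0 : (a₁ ^ 2 + x ^ 2)⁻¹ *
        ((1 / 2) * (Real.log (a₁ ^ 2 + (x - 0) ^ 2) - Real.log (a₁ ^ 2 + (x + 0) ^ 2))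
          + (x / a₁) * (Real.arctan ((x - 0) / a₁) - Real.arctan ((x + 0) / a₁))) = 0 := by
      norm_num
    have := hc.tendsto
    rw [h0] at this
    exact this
  have hD : Tendsto (fun ε : ℝ => PVG a₁ x (x - ε) - PVG a₁ x (x + ε)) (𝓝 0) (𝓝 0) :=
    hE.congr fun ε => (hEeq ε).symm
  have hφ : Tendsto φ (𝓝 0) (𝓝 (PVH a₁ a₂ α x)) := by
    have h2' := hD.add_const (α * K₁ - PVG a₁ x (-1) + PVG a₁ x 1 + α * K₂)
    have hfun : ∀ ε : ℝ, (PVG a₁ x (x - ε) - PVG a₁ x (x + ε))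
        + (α * K₁ - PVG a₁ x (-1) + PVG a₁ x 1 + α * K₂) = φ ε := fun ε => by
      rw [hφdef]; ring
    have hval : (0 : ℝ) + (α * K₁ - PVG a₁ x (-1) + PVG a₁ x 1 + α * K₂)
        = PVH a₁ a₂ α x := by
      rw [hK₁, hK₂, integral_PVg_Iic h₂ hx1, integral_PVg_Ioi h₂ hx2]
      unfold PVH
      ring
    rw [hval] at h2'
    exact h2'.congr hfun
  have hev : φ =ᶠ[𝓝[>] (0:ℝ)] (fun ε : ℝ => ∫ y in {y : ℝ | ε < |y - x|},
      (if |y| ≤ 1 then 1 / (a₁ ^ 2 + y ^ 2) else α / (a₂ ^ 2 + y ^ 2)) / (x - y)) := by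
    filter_upwards [Ioo_mem_nhdsGT_of_mem (Set.left_mem_Ico.mpr hδ)] with ε hε
    rw [pv_key a₁ a₂ α x ε h₁ h₂ heq hx1 hx2 hε.1
      (lt_of_lt_of_le hε.2 (min_le_left _ _)) (lt_of_lt_of_le hε.2 (min_le_right _ _))]
  exact Tendsto.congr' hev (hφ.mono_left nhdsWithin_le_nhds)

lemma pv_part2 (a₁ a₂ α : ℝ) (h₁ : 0 < a₁) (h₂ : 0 < a₂)
    (hα : α = (a₂ ^ 2 + 1) / (a₁ ^ 2 + 1)) :
    Tendsto (fun x => PVH a₁ a₂ α x) (𝓝[<] (1 : ℝ))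
      (𝓝 (2 * Real.arctan (1 / a₁) / (a₁ * (a₁ ^ 2 + 1))
        + 2 * α * Real.arctan a₂ / (a₂ * (a₂ ^ 2 + 1)))) := by
  subst hα
  have hA1 : (0:ℝ) < a₁ ^ 2 + 1 := by positivity
  have hA2 : (0:ℝ) < a₂ ^ 2 + 1 := by positivity
  set α := (a₂ ^ 2 + 1) / (a₁ ^ 2 + 1) with hαdef
  set S : ℝ → ℝ := fun x =>
    α * (a₂ ^ 2 + x ^ 2)⁻¹ *
        (-(2 * x / a₂) * Real.arctan (1 / a₂) - Real.log (x + 1) + x * π / a₂)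
      + (a₁ ^ 2 + x ^ 2)⁻¹ * ((2 * x / a₁) * Real.arctan (1 / a₁) + Real.log (x + 1)) with hS
  set T : ℝ → ℝ := fun x =>
    ((1 - x) * Real.log (1 - x)) *
      ((1 + x) * (α * ((a₂ ^ 2 + x ^ 2) * (a₂ ^ 2 + 1))⁻¹
        - ((a₁ ^ 2 + x ^ 2) * (a₁ ^ 2 + 1))⁻¹)) with hT
  have hid : ∀ x : ℝ, PVH a₁ a₂ α x = S x + T x := by
    intro x
    have hx1 : (0:ℝ) < a₁ ^ 2 + x ^ 2 := by positivity
    have hx2 : (0:ℝ) < a₂ ^ 2 + x ^ 2 := by positivity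
    rw [hS, hT]
    unfold PVH PVG
    simp only [show ((-1:ℝ)) ^ 2 = 1 ^ 2 by norm_num, neg_div, Real.arctan_neg,
      show ∀ z : ℝ, z - (-1) = z + 1 from fun z => by ring,
      show (1:ℝ)/a₁ = 1/a₁ from rfl]
    rw [show x - (1:ℝ) = -(1 - x) by ring, Real.log_neg_eq_log]
    rw [hαdef]
    field_simp
    ring
  have hlog : ContinuousAt (fun x : ℝ => Real.log (x + 1)) 1 :=
    (Real.continuousAt_log (by norm_num)).comp (by fun_prop)
  have hSc : ContinuousAt S 1 := by
    rw [hS]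
    apply ContinuousAt.add
    · apply ContinuousAt.mul
      · exact continuousAt_const.mul (ContinuousAt.inv₀ (by fun_prop) (by positivity))
      · exact ContinuousAt.add (ContinuousAt.sub (by fun_prop) hlog) (by fun_prop)
    · exact ContinuousAt.mul (ContinuousAt.inv₀ (by fun_prop) (by positivity))
        (ContinuousAt.add (by fun_prop) hlog)
  have hTc : ContinuousAt T 1 := by
    rw [hT]
    apply ContinuousAt.mul
    · exact (Real.continuous_mul_log.continuousAt).comp (by fun_prop)
    · apply ContinuousAt.mul (by fun_prop)
      apply ContinuousAt.sub
      · exact continuousAt_const.mul (ContinuousAt.inv₀ (by fun_prop) (by positivity))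
      · exact ContinuousAt.inv₀ (by fun_prop) (by positivity)
  have hT1 : T 1 = 0 := by
    rw [hT]
    norm_num
  have hS1 : S 1 + T 1 = 2 * Real.arctan (1 / a₁) / (a₁ * (a₁ ^ 2 + 1))
      + 2 * α * Real.arctan a₂ / (a₂ * (a₂ ^ 2 + 1)) := by
    rw [hT1, hS]
    simp only [add_zero]
    rw [show (1:ℝ)/a₂ = a₂⁻¹ by rw [one_div], Real.arctan_inv_of_pos h₂, hαdef]
    have h12 : Real.log (1 + 1 : ℝ) = Real.log 2 := by norm_num
    field_simp
    ring
  have htend : Tendsto (fun x => S x + T x) (𝓝 1)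
      (𝓝 (2 * Real.arctan (1 / a₁) / (a₁ * (a₁ ^ 2 + 1))
        + 2 * α * Real.arctan a₂ / (a₂ * (a₂ ^ 2 + 1)))) := by
    rw [← hS1]
    exact (hSc.add hTc).tendsto
  exact Tendsto.congr (fun x => (hid x).symm) (htend.mono_left nhdsWithin_le_nhds)


/-- With `α = (a₂² + 1)/(a₁² + 1)` (so that the piecewise function `f`
is continuous), the principal value `h(x) = PV∫_ℝ f(y)/(x−y) dy` exists for every
`x ∈ (−1,1)` and has the finite one-sided limit
`2·arctan(1/a₁)/(a₁·(a₁² + 1)) + 2α·arctan(a₂)/(a₂·(a₂² + 1))` as `x → 1⁻`. -/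
theorem pv_continuous_piecewise_limit (a₁ a₂ α : ℝ) (h₁ : 0 < a₁) (h₂ : 0 < a₂)
    (hα : α = (a₂ ^ 2 + 1) / (a₁ ^ 2 + 1)) :
    ∃ h : ℝ → ℝ,
      (∀ x ∈ Ioo (-1 : ℝ) 1,
        Tendsto
          (fun ε : ℝ => ∫ y in {y : ℝ | ε < |y - x|},
            (if |y| ≤ 1 then 1 / (a₁ ^ 2 + y ^ 2) else α / (a₂ ^ 2 + y ^ 2)) / (x - y))
          (𝓝[>] 0) (𝓝 (h x)))
      ∧ Tendsto h (𝓝[<] (1 : ℝ))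
          (𝓝 (2 * Real.arctan (1 / a₁) / (a₁ * (a₁ ^ 2 + 1))
            + 2 * α * Real.arctan a₂ / (a₂ * (a₂ ^ 2 + 1)))) := by
  
  have heq : 1 / (a₁ ^ 2 + 1) = α / (a₂ ^ 2 + 1) := by
    rw [hα]
    have : (0:ℝ) < a₁ ^ 2 + 1 := by positivity
    have : (0:ℝ) < a₂ ^ 2 + 1 := by positivity
    field_simp
  exact ⟨PVH a₁ a₂ α, fun x hx => pv_part1 a₁ a₂ α h₁ h₂ heq hx,
    pv_part2 a₁ a₂ α h₁ h₂ hα⟩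
end

section
/- For every x ∈ ℝ with x ≠ 0, the principal value PV∫_ℝ e^{−|y|}/(x−y) dy exists and equals sgn(x)·(e^{|x|}·E₁(|x|) + e^{−|x|}·Ei(|x|)), where E₁ and Ei are the exponential integrals. -/
open MeasureTheory Filter Set Topology

lemma setIntegral_comp_add (f : ℝ → ℝ) (s : Set ℝ) (c : ℝ) :
    ∫ y in s, f y = ∫ t in (fun t => t + c) ⁻¹' s, f (t + c) := by
  have A : MeasurableEmbedding (fun t : ℝ => t + c) :=
    (MeasurableEquiv.addRight c).measurableEmbedding
  have := A.setIntegral_map (μ := volume) f s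
  rwa [map_add_right_eq_self (volume : Measure ℝ) c] at this

lemma setIntegral_comp_neg' (f : ℝ → ℝ) (s : Set ℝ) :
    ∫ y in s, f y = ∫ t in (fun t : ℝ => -t) ⁻¹' s, f (-t) := by
  have A : MeasurableEmbedding (fun t : ℝ => -t) :=
    (Homeomorph.neg ℝ).measurableEmbedding
  have := A.setIntegral_map (μ := volume) f s
  rwa [Measure.map_neg_eq_self (volume : Measure ℝ)] at this

lemma int_E1 {ε : ℝ} (hε : 0 < ε) :
    IntegrableOn (fun t => Real.exp (-t) / t) (Ioi ε) := by
  have h : IntegrableOn (fun t => Real.exp (-1 * t)) (Ioi ε) :=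
    exp_neg_integrableOn_Ioi ε one_pos
  refine (h.const_mul ε⁻¹).mono ?_ ?_
  · exact ((Real.measurable_exp.comp measurable_neg).div measurable_id).aestronglyMeasurable
  · filter_upwards [ae_restrict_mem measurableSet_Ioi] with t ht
    have ht0 : 0 < t := hε.trans ht
    rw [Real.norm_eq_abs, Real.norm_eq_abs, abs_of_nonneg (by positivity),
      abs_of_nonneg (by positivity)]
    rw [div_eq_mul_inv, mul_comm (ε⁻¹), neg_one_mul]
    gcongr
    exact le_of_lt ht

lemma habs : Integrable (fun y : ℝ => Real.exp (-|y|)) := by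
  have h1 : IntegrableOn (fun y : ℝ => Real.exp (-|y|)) (Ioi 0) := by
    refine ((exp_neg_integrableOn_Ioi 0 one_pos).congr_fun ?_ measurableSet_Ioi)
    intro y hy
    simp [abs_of_pos (mem_Ioi.mp hy)]
  have h2 : IntegrableOn (fun y : ℝ => Real.exp (-|y|)) (Iic 0) := by
    rw [← Measure.map_neg_eq_self (volume : Measure ℝ)]
    have m : MeasurableEmbedding fun x : ℝ => -x := (Homeomorph.neg ℝ).measurableEmbedding
    rw [m.integrableOn_map_iff]
    simp only [Function.comp_def, abs_neg, neg_preimage, neg_Iic, neg_zero]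
    exact Iff.mpr integrableOn_Ici_iff_integrableOn_Ioi h1
  have := h2.union h1
  rwa [Iic_union_Ioi, integrableOn_univ] at this

lemma negflip (a ε : ℝ) :
    (∫ t in (-a)..(-ε), Real.exp (-t) / t) = -∫ t in ε..a, Real.exp t / t := by
  have := intervalIntegral.integral_comp_neg (a := ε) (b := a)
    (f := fun t => Real.exp (-t) / t)
  rw [← this, ← intervalIntegral.integral_neg]
  congr 1
  ext t
  rw [neg_neg]
  ring

noncomputable def hh : ℝ → ℝ := fun t => (Real.exp (-t) - Real.exp t) / t

lemma hh_int {a : ℝ} (ha : 0 < a) : IntegrableOn hh (Icc 0 a) := by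
  refine Measure.integrableOn_of_bounded (M := 2 * Real.exp a) (by simp) ?_ ?_
  · exact (((Real.measurable_exp.comp measurable_neg).sub
      Real.measurable_exp).div measurable_id).aestronglyMeasurable
  · filter_upwards [ae_restrict_mem measurableSet_Icc] with t ht
    rcases eq_or_lt_of_le ht.1 with h0 | h0
    · simp [hh, ← h0]
      positivity
    · have h1 : Real.exp t - Real.exp (-t) ≤ 2 * t * Real.exp a := by
        have e1 : Real.exp t - Real.exp (-t) = Real.exp t * (1 - Real.exp (-2 * t)) := by
          rw [mul_sub, mul_one, ← Real.exp_add]; ring_nf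
        have e2 : 1 - Real.exp (-2 * t) ≤ 2 * t := by
          nlinarith [Real.add_one_le_exp (-2 * t)]
        have e3 : Real.exp t ≤ Real.exp a := Real.exp_le_exp.mpr ht.2
        nlinarith [Real.exp_pos t, (Real.exp_pos t).le, mul_le_mul e3 e2 (by nlinarith [Real.exp_le_one_iff.mpr (by linarith : -2*t ≤ 0)]) (Real.exp_pos a).le]
      have h2 : 0 ≤ Real.exp t - Real.exp (-t) := by
        have := Real.exp_le_exp.mpr (neg_le_self h0.le)
        linarith
      rw [hh, Real.norm_eq_abs, abs_div, abs_of_pos h0,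
        abs_of_nonpos (by linarith), neg_sub, div_le_iff₀ h0]
      calc Real.exp t - Real.exp (-t) ≤ 2 * t * Real.exp a := h1
        _ = 2 * Real.exp a * t := by ring

lemma cont_int {ε a : ℝ} (hε : 0 < ε) (hεa : ε ≤ a) :
    IntervalIntegrable (fun t => Real.exp (-t) / t) volume ε a := by
  apply ContinuousOn.intervalIntegrable
  apply ContinuousOn.div
  · exact (Real.continuous_exp.comp continuous_neg).continuousOn
  · exact continuousOn_id
  · intro t ht
    rw [uIcc_of_le hεa] at ht
    exact ne_of_gt (lt_of_lt_of_le hε ht.1)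

lemma cont_int' {ε a : ℝ} (hε : 0 < ε) (hεa : ε ≤ a) :
    IntervalIntegrable (fun t => Real.exp t / t) volume ε a := by
  apply ContinuousOn.intervalIntegrable
  apply ContinuousOn.div
  · exact Real.continuous_exp.continuousOn
  · exact continuousOn_id
  · intro t ht
    rw [uIcc_of_le hεa] at ht
    exact ne_of_gt (lt_of_lt_of_le hε ht.1)

lemma sum_eq {a ε : ℝ} (hε : 0 < ε) (hεa : ε < a) :
    (∫ t in (-a)..(-ε), Real.exp (-t) / t) + ∫ t in Ioi ε, Real.exp (-t) / t
      = (∫ t in ε..a, hh t) + ∫ t in Ioi a, Real.exp (-t) / t := by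
  have ha : (0:ℝ) < a := hε.trans hεa
  have hsplit : (∫ t in Ioi ε, Real.exp (-t) / t)
      = (∫ t in Ioc ε a, Real.exp (-t) / t) + ∫ t in Ioi a, Real.exp (-t) / t := by
    rw [← setIntegral_union (Ioc_disjoint_Ioi le_rfl) measurableSet_Ioi
      ((int_E1 hε).mono_set Ioc_subset_Ioi_self) ((int_E1 ha).mono_set (by rfl)),
      Ioc_union_Ioi_eq_Ioi hεa.le]
  have hhh : (∫ t in ε..a, hh t)
      = (∫ t in ε..a, Real.exp (-t) / t) - ∫ t in ε..a, Real.exp t / t := by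
    rw [← intervalIntegral.integral_sub (cont_int hε hεa.le) (cont_int' hε hεa.le)]
    congr 1
    ext t
    rw [hh, sub_div]
  rw [negflip, hsplit, hhh]; simp only [intervalIntegral.integral_of_le hεa.le]
  ring

lemma tendsto_sum {a : ℝ} (ha : 0 < a) :
    Tendsto (fun ε => (∫ t in (-a)..(-ε), Real.exp (-t) / t)
        + ∫ t in Ioi ε, Real.exp (-t) / t) (𝓝[>] (0:ℝ))
      (𝓝 ((∫ t in (0:ℝ)..a, hh t) + ∫ t in Ioi a, Real.exp (-t) / t)) := by
  have hc : ContinuousOn (fun ε => ∫ t in ε..a, hh t) (uIcc 0 a) :=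
    intervalIntegral.continuousOn_primitive_interval_left
      (by rw [uIcc_of_le ha.le]; exact hh_int ha)
  have hcw := hc 0 left_mem_uIcc
  have h1 : Tendsto (fun ε => ∫ t in ε..a, hh t) (𝓝[>] (0:ℝ))
      (𝓝 (∫ t in (0:ℝ)..a, hh t)) := by
    refine hcw.tendsto.mono_left ?_
    rw [← nhdsWithin_Ioc_eq_nhdsGT ha, uIcc_of_le ha.le]
    exact nhdsWithin_mono 0 Ioc_subset_Icc_self
  refine Tendsto.congr' ?_ (h1.add tendsto_const_nhds)
  filter_upwards [Ioo_mem_nhdsGT_of_mem (Set.left_mem_Ico.mpr ha)] with ε hε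
  exact (sum_eq hε.1 hε.2).symm

lemma intf {a ε : ℝ} (hε : 0 < ε) {s : Set ℝ} (hs : MeasurableSet s)
    (h : ∀ y ∈ s, ε ≤ |a - y|) :
    IntegrableOn (fun y => Real.exp (-|y|) / (a - y)) s := by
  refine Integrable.mono ((habs.const_mul ε⁻¹).integrableOn) ?_ ?_
  · exact ((Real.measurable_exp.comp measurable_abs.neg).div
      (measurable_const.sub measurable_id)).aestronglyMeasurable
  · filter_upwards [ae_restrict_mem hs] with y hy
    have h1 : ε ≤ |a - y| := h y hy
    rw [Real.norm_eq_abs, Real.norm_eq_abs, abs_div, abs_of_pos (Real.exp_pos _), abs_mul,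
      abs_of_pos (inv_pos.mpr hε), abs_of_pos (Real.exp_pos _), div_eq_mul_inv,
      mul_comm ε⁻¹]
    gcongr


lemma keyP2 {a ε : ℝ} (ha : 0 < a) (hε : 0 < ε) :
    ∫ y in Ioi (a + ε), Real.exp (-|y|) / (a - y)
      = -(Real.exp (-a) * ∫ t in Ioi ε, Real.exp (-t) / t) := by
  rw [setIntegral_comp_add (fun y => Real.exp (-|y|) / (a - y)) (Ioi (a + ε)) a]
  have hpre : (fun t : ℝ => t + a) ⁻¹' Ioi (a + ε) = Ioi ε := by
    ext t; simp only [mem_preimage, mem_Ioi]; constructor <;> intro h <;> linarith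
  rw [hpre]
  have hcg : ∀ t ∈ Ioi ε, Real.exp (-|t + a|) / (a - (t + a))
      = -(Real.exp (-a) * (Real.exp (-t) / t)) := by
    intro t ht
    have ht0 : 0 < t := hε.trans ht
    rw [abs_of_pos (by linarith)]
    have h1 : -(t + a) = -t + -a := by ring
    rw [h1, Real.exp_add]
    have h2 : a - (t + a) = -t := by ring
    rw [h2, div_neg]
    ring
  rw [setIntegral_congr_fun measurableSet_Ioi hcg, integral_neg, integral_const_mul]

lemma keyP1a {a : ℝ} (ha : 0 < a) :
    ∫ y in Iio (0:ℝ), Real.exp (-|y|) / (a - y)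
      = Real.exp a * ∫ t in Ioi a, Real.exp (-t) / t := by
  have h1 : ∀ x : ℝ, Real.exp (-|x|) / (a - x)
      = (fun u : ℝ => Real.exp (-|u|) / (a + u)) (-x) := by
    intro x; simp only [abs_neg]; ring_nf
  have step : (∫ y in Iio (0:ℝ), Real.exp (-|y|) / (a - y))
      = ∫ u in Ioi (0:ℝ), Real.exp (-|u|) / (a + u) := by
    calc (∫ y in Iio (0:ℝ), Real.exp (-|y|) / (a - y))
        = ∫ y in Iic (0:ℝ), Real.exp (-|y|) / (a - y) := setIntegral_congr_set Iio_ae_eq_Iic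
      _ = ∫ y in Iic (0:ℝ), (fun u : ℝ => Real.exp (-|u|) / (a + u)) (-y) :=
          setIntegral_congr_fun measurableSet_Iic (fun y _ => h1 y)
      _ = ∫ u in Ioi (-(0:ℝ)), Real.exp (-|u|) / (a + u) := by
          exact integral_comp_neg_Iic 0 (fun u : ℝ => Real.exp (-|u|) / (a + u))
      _ = ∫ u in Ioi (0:ℝ), Real.exp (-|u|) / (a + u) := by rw [neg_zero]
  rw [step]
  rw [setIntegral_comp_add (fun u : ℝ => Real.exp (-|u|) / (a + u)) (Ioi 0) (-a)]
  have hpre : (fun t : ℝ => t + -a) ⁻¹' Ioi 0 = Ioi a := by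
    ext t; simp only [mem_preimage, mem_Ioi]; constructor <;> intro h <;> linarith
  rw [hpre]
  have hcg : ∀ t ∈ Ioi a, Real.exp (-|t + -a|) / (a + (t + -a))
      = Real.exp a * (Real.exp (-t) / t) := by
    intro t ht
    have ht0 : 0 < t := ha.trans ht
    rw [abs_of_pos (by simp only [mem_Ioi] at ht; linarith)]
    have h2 : a + (t + -a) = t := by ring
    have h3 : -(t + -a) = -t + a := by ring
    rw [h2, h3, Real.exp_add]
    field_simp
  rw [setIntegral_congr_fun measurableSet_Ioi hcg, integral_const_mul]

lemma keyP1b {a ε : ℝ} (hε : 0 < ε) (hεa : ε < a) :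
    ∫ y in Ico (0:ℝ) (a - ε), Real.exp (-|y|) / (a - y)
      = Real.exp (-a) * ∫ t in ε..a, Real.exp t / t := by
  rw [setIntegral_congr_set Ico_ae_eq_Ioc]
  have hcg : ∀ y ∈ Ioc (0:ℝ) (a - ε), Real.exp (-|y|) / (a - y)
      = (fun t : ℝ => Real.exp (t - a) / t) (a - y) := by
    intro y hy
    simp only
    rw [abs_of_pos hy.1]
    congr 1
    ring_nf
  rw [setIntegral_congr_fun measurableSet_Ioc hcg,
    ← intervalIntegral.integral_of_le (by linarith : (0:ℝ) ≤ a - ε),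
    intervalIntegral.integral_comp_sub_left (fun t : ℝ => Real.exp (t - a) / t) a]
  have h1 : a - (a - ε) = ε := by ring
  rw [h1, sub_zero]
  have h2 : (fun t : ℝ => Real.exp (t - a) / t) = fun t => Real.exp (-a) * (Real.exp t / t) := by
    funext t
    rw [Real.exp_sub, Real.exp_neg]
    ring
  rw [h2, intervalIntegral.integral_const_mul]

lemma key {a ε : ℝ} (ha : 0 < a) (hε : 0 < ε) (hεa : ε < a) :
    ∫ y in {y : ℝ | ε < |y - a|}, Real.exp (-|y|) / (a - y)
      = Real.exp a * (∫ t in Ioi a, Real.exp (-t) / t)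
        + Real.exp (-a) * (-((∫ t in (-a)..(-ε), Real.exp (-t) / t)
          + ∫ t in Ioi ε, Real.exp (-t) / t)) := by
  have hset : {y : ℝ | ε < |y - a|} = Iio (a - ε) ∪ Ioi (a + ε) := by
    ext y
    simp only [mem_setOf_eq, lt_abs, mem_union, mem_Iio, mem_Ioi]
    constructor
    · rintro (h | h)
      · right; linarith
      · left; linarith
    · rintro (h | h)
      · right; linarith
      · left; linarith
  have hI1 : IntegrableOn (fun y => Real.exp (-|y|) / (a - y)) (Iio (a - ε)) := by
    refine intf hε measurableSet_Iio fun y hy => ?_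
    rw [mem_Iio] at hy
    rw [abs_of_pos (by linarith)]
    linarith
  have hI2 : IntegrableOn (fun y => Real.exp (-|y|) / (a - y)) (Ioi (a + ε)) := by
    refine intf hε measurableSet_Ioi fun y hy => ?_
    rw [mem_Ioi] at hy
    rw [abs_of_neg (by linarith), neg_sub]
    linarith
  have hIio0 : IntegrableOn (fun y => Real.exp (-|y|) / (a - y)) (Iio 0) :=
    hI1.mono_set (Iio_subset_Iio (by linarith))
  have hIco : IntegrableOn (fun y => Real.exp (-|y|) / (a - y)) (Ico 0 (a - ε)) :=
    hI1.mono_set (fun y hy => hy.2)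
  have hd1 : Disjoint (Iio (a - ε)) (Ioi (a + ε)) := by
    refine Set.disjoint_left.mpr fun y h1 h2 => ?_
    rw [mem_Iio] at h1; rw [mem_Ioi] at h2; linarith
  have hd2 : Disjoint (Iio (0:ℝ)) (Ico (0:ℝ) (a - ε)) := by
    refine Set.disjoint_left.mpr fun y h1 h2 => ?_
    rw [mem_Iio] at h1; exact absurd h2.1 (not_le.mpr h1)
  rw [hset, setIntegral_union hd1 measurableSet_Ioi hI1 hI2,
    ← Iio_union_Ico_eq_Iio (by linarith : (0:ℝ) ≤ a - ε),
    setIntegral_union hd2 measurableSet_Ico hIio0 hIco,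
    keyP1a ha, keyP1b hε hεa, keyP2 ha hε, negflip]
  ring

/-- For every `x ≠ 0`, the principal value `PV∫_ℝ e^{−|y|}/(x−y) dy`
exists and equals `sgn(x)·(e^{|x|}·E₁(|x|) + e^{−|x|}·Ei(|x|))`, where
`E₁(x) = ∫_x^∞ e^{−t}/t dt` and
`Ei(x) = −lim_{ε→0⁺}(∫_{−x}^{−ε} e^{−t}/t dt + ∫_ε^∞ e^{−t}/t dt)`. -/
theorem pv_exp_abs (x : ℝ) (hx : x ≠ 0) :
    ∃ Ei : ℝ,
      Tendsto
        (fun ε : ℝ => -((∫ t in (-|x|)..(-ε), Real.exp (-t) / t)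
          + ∫ t in Ioi ε, Real.exp (-t) / t))
        (𝓝[>] 0) (𝓝 Ei)
      ∧ Tendsto
          (fun ε : ℝ => ∫ y in {y : ℝ | ε < |y - x|}, Real.exp (-|y|) / (x - y))
          (𝓝[>] 0)
          (𝓝 (Real.sign x * (Real.exp |x| * (∫ t in Ioi |x|, Real.exp (-t) / t)
            + Real.exp (-|x|) * Ei))) := by
  have ha : 0 < |x| := abs_pos.mpr hx
  set a := |x| with ha_def
  set Ei : ℝ := -((∫ t in (0:ℝ)..a, hh t) + ∫ t in Ioi a, Real.exp (-t) / t) with hEi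
  have hG : Tendsto (fun ε : ℝ => -((∫ t in (-a)..(-ε), Real.exp (-t) / t)
      + ∫ t in Ioi ε, Real.exp (-t) / t)) (𝓝[>] (0:ℝ)) (𝓝 Ei) := (tendsto_sum ha).neg
  refine ⟨Ei, hG, ?_⟩
  have hT : Tendsto (fun ε : ℝ => Real.exp a * (∫ t in Ioi a, Real.exp (-t) / t)
      + Real.exp (-a) * (-((∫ t in (-a)..(-ε), Real.exp (-t) / t)
        + ∫ t in Ioi ε, Real.exp (-t) / t))) (𝓝[>] (0:ℝ))
      (𝓝 (Real.exp a * (∫ t in Ioi a, Real.exp (-t) / t) + Real.exp (-a) * Ei)) :=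
    tendsto_const_nhds.add (hG.const_mul _)
  rcases hx.lt_or_gt with hneg | hpos
  · -- x < 0
    have hax : |x| = -x := abs_of_neg hneg
    rw [Real.sign_of_neg hneg, neg_one_mul]
    refine Tendsto.congr' ?_ hT.neg
    filter_upwards [Ioo_mem_nhdsGT_of_mem (Set.left_mem_Ico.mpr ha)] with ε hε
    have hk := key ha hε.1 hε.2
    have hflip : ∫ y in {y : ℝ | ε < |y - x|}, Real.exp (-|y|) / (x - y)
        = -∫ y in {y : ℝ | ε < |y - a|}, Real.exp (-|y|) / (a - y) := by
      rw [setIntegral_comp_neg' (fun y => Real.exp (-|y|) / (x - y)) {y : ℝ | ε < |y - x|}]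
      have hpre : (fun t : ℝ => -t) ⁻¹' {y : ℝ | ε < |y - x|} = {y : ℝ | ε < |y - a|} := by
        ext t
        simp only [mem_preimage, mem_setOf_eq]
        rw [ha_def, hax, show -t - x = -(t - -x) from by ring, abs_neg]
      rw [hpre]
      rw [show (fun t : ℝ => Real.exp (-|-t|) / (x - -t))
          = fun t : ℝ => -(Real.exp (-|t|) / (a - t)) from ?_, integral_neg]
      funext t
      rw [abs_neg, sub_neg_eq_add, ha_def, hax,
        show -x - t = -(x + t) from by ring, div_neg, neg_neg]
    rw [hflip, hk]
  · -- x > 0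
    have hax : |x| = x := abs_of_pos hpos
    rw [Real.sign_of_pos hpos, one_mul]
    refine Tendsto.congr' ?_ hT
    filter_upwards [Ioo_mem_nhdsGT_of_mem (Set.left_mem_Ico.mpr ha)] with ε hε
    have hk := key ha hε.1 hε.2
    rw [ha_def, hax] at hk
    rw [hk, ha_def, hax]
end
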